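/- arXiv:1803.01031 — 5 statements merged into one kernel-verified Lean document; each statement's English description precedes it below -/
import Mathlib

section
/- The sequence {pa(n)}_{n≥1} is strictly increasing: for every positive integer n, pa(n) < pa(n+1). -/
/-- A partition is (unlimited) parity alternating if any two consecutive distinct part
sizes have opposite parity. -/
def ParityAlternating {n : ℕ} (p : n.Partition) : Prop :=
  ∀ a ∈ p.parts, ∀ b ∈ p.parts, a < b →
    (∀ c ∈ p.parts, ¬(a < c ∧ c < b)) → (Odd a ↔ Even b)

namespace PAaux

/-- The parity alternating condition on a bare multiset. -/
def PAm (s : Multiset ℕ) : Prop :=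
  ∀ a ∈ s, ∀ b ∈ s, a < b → (∀ c ∈ s, ¬(a < c ∧ c < b)) → (Odd a ↔ Even b)

/-- The maximum element of a multiset of naturals (0 for the empty multiset). -/
def mx (s : Multiset ℕ) : ℕ := WithBot.unbotD 0 s.toFinset.max

lemma mx_spec {s : Multiset ℕ} (h : s ≠ 0) : mx s ∈ s ∧ ∀ y ∈ s, y ≤ mx s := by
  have hne : s.toFinset.Nonempty := Multiset.toFinset_nonempty.mpr h
  have hmx : mx s = s.toFinset.max' hne := by
    unfold mx
    rw [← Finset.coe_max' hne]
    rfl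
  constructor
  · rw [hmx]; exact Multiset.mem_toFinset.mp (Finset.max'_mem _ hne)
  · intro y hy; rw [hmx]; exact Finset.le_max' _ y (Multiset.mem_toFinset.mpr hy)

lemma exists_min {s : Multiset ℕ} (h : s ≠ 0) : ∃ m ∈ s, ∀ y ∈ s, m ≤ y := by
  have hne : s.toFinset.Nonempty := Multiset.toFinset_nonempty.mpr h
  exact ⟨s.toFinset.min' hne, Multiset.mem_toFinset.mp (Finset.min'_mem _ hne),
    fun y hy => Finset.min'_le _ y (Multiset.mem_toFinset.mpr hy)⟩

/-- Case A condition: the partition contains a part 1, or its minimal part is even. -/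
def condA (s : Multiset ℕ) : Prop := 1 ∈ s ∨ ∃ x ∈ s, Even x ∧ ∀ y ∈ s, x ≤ y

noncomputable instance : DecidablePred condA := fun _ => Classical.propDecidable _

/-- Case B condition: the largest part appears at least twice, or there is only one
distinct part size. -/
def condB (s : Multiset ℕ) : Prop := 2 ≤ s.count (mx s) ∨ s.toFinset.card = 1

instance : DecidablePred condB := fun s => by unfold condB; infer_instance

/-- The injection on part multisets. -/
noncomputable def fM (s : Multiset ℕ) : Multiset ℕ :=
  if condA s then 1 ::ₘ s
  else if condB s then (mx s + 1) ::ₘ s.erase (mx s)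
  else
    mx (s.erase (mx s)) ::ₘ
      (Multiset.replicate ((mx s + 1 - mx (s.erase (mx s))) / 2) 2 + s.erase (mx s))

/-- The left inverse of `fM`. -/
def gM (q : Multiset ℕ) : Multiset ℕ :=
  if 1 ∈ q then q.erase 1
  else if 2 ∈ q then
    (mx q + 2 * q.count 2 - 1) ::ₘ (q.erase (mx q)).filter (· ≠ 2)
  else (mx q - 1) ::ₘ q.erase (mx q)

section Facts

variable {s : Multiset ℕ}

lemma notA_min (hpos : ∀ x ∈ s, 0 < x) (hne : s ≠ 0) (hA : ¬ condA s) :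
    ∃ m ∈ s, (∀ y ∈ s, m ≤ y) ∧ Odd m ∧ 3 ≤ m := by
  obtain ⟨m, hm, hmin⟩ := exists_min hne
  unfold condA at hA
  push_neg at hA
  obtain ⟨h1, h2⟩ := hA
  have hm1 : m ≠ 1 := by rintro rfl; exact h1 hm
  have hmpos : 0 < m := hpos m hm
  have hmodd : Odd m := by
    rcases Nat.even_or_odd m with he | ho
    · obtain ⟨y, hy, hlt⟩ := h2 m hm he
      exact absurd (hmin y hy) (by omega)
    · exact ho
  refine ⟨m, hm, hmin, hmodd, ?_⟩
  rw [Nat.odd_iff] at hmodd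
  omega

lemma three_le (hpos : ∀ x ∈ s, 0 < x) (hne : s ≠ 0) (hA : ¬ condA s) :
    ∀ x ∈ s, 3 ≤ x := by
  obtain ⟨m, hm, hmin, _, hm3⟩ := notA_min hpos hne hA
  exact fun x hx => le_trans hm3 (hmin x hx)

lemma sum_erase_mx (hne : s ≠ 0) : s.sum = mx s + (s.erase (mx s)).sum := by
  conv_lhs => rw [← Multiset.cons_erase (mx_spec hne).1]
  rw [Multiset.sum_cons]

/-- Facts about case C. -/
lemma caseC_facts (hpos : ∀ x ∈ s, 0 < x) (hPA : PAm s) (hne : s ≠ 0)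
    (hA : ¬ condA s) (hB : ¬ condB s) :
    mx (s.erase (mx s)) ∈ s.erase (mx s) ∧
    (∀ y ∈ s.erase (mx s), y ≤ mx (s.erase (mx s))) ∧
    mx (s.erase (mx s)) < mx s ∧
    mx (s.erase (mx s)) + 2 * ((mx s + 1 - mx (s.erase (mx s))) / 2) = mx s + 1 ∧
    1 ≤ (mx s + 1 - mx (s.erase (mx s))) / 2 := by
  unfold condB at hB
  push_neg at hB
  obtain ⟨hcount, hcard⟩ := hB
  set t := mx s with hts
  set e := s.erase t with hes
  obtain ⟨htmem, htle⟩ := mx_spec hne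
  have hcount1 : s.count t = 1 := by
    have : 0 < s.count t := Multiset.count_pos.mpr htmem
    omega
  -- e is nonempty
  have hex : ∃ x ∈ s, x ≠ t := by
    by_contra hall
    push_neg at hall
    apply hcard
    have hsub : s.toFinset = {t} := by
      apply Finset.eq_singleton_iff_unique_mem.mpr
      exact ⟨Multiset.mem_toFinset.mpr htmem, fun x hx => hall x (Multiset.mem_toFinset.mp hx)⟩
    rw [hsub, Finset.card_singleton]
  have hene : e ≠ 0 := by
    obtain ⟨x, hx, hxt⟩ := hex
    intro h0
    have : x ∈ e := (Multiset.mem_erase_of_ne hxt).mpr hx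
    rw [h0] at this
    exact Multiset.notMem_zero x this
  obtain ⟨hwmem, hwle⟩ := mx_spec hene
  set w := mx e with hws
  have hwmem' : w ∈ s := Multiset.mem_of_mem_erase hwmem
  have htnotine : t ∉ e := by
    rw [hes]
    intro hmem
    have := Multiset.count_erase_self t s
    have h1 : 0 < (s.erase t).count t := Multiset.count_pos.mpr hmem
    omega
  have hwt : w < t := lt_of_le_of_ne (htle w hwmem') (fun h => htnotine (h ▸ hwmem))
  -- parity
  have hadj : Odd w ↔ Even t := by
    apply hPA w hwmem' t htmem hwt
    intro c hc ⟨h1, h2⟩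
    have hct : c ≠ t := ne_of_lt h2
    have : c ∈ e := (Multiset.mem_erase_of_ne hct).mpr hc
    exact absurd (hwle c this) (not_le.mpr h1)
  rw [Nat.odd_iff] at hadj
  rw [Nat.even_iff] at hadj
  refine ⟨hwmem, hwle, hwt, ?_, ?_⟩ <;> omega

end Facts

section Main

variable {s : Multiset ℕ}

lemma fM_pos (hpos : ∀ x ∈ s, 0 < x) (hPA : PAm s) (hne : s ≠ 0) :
    ∀ x ∈ fM s, 0 < x := by
  unfold fM
  split_ifs with hA hB
  · intro x hx
    rcases Multiset.mem_cons.mp hx with rfl | hx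
    · norm_num
    · exact hpos x hx
  · intro x hx
    rcases Multiset.mem_cons.mp hx with rfl | hx
    · omega
    · exact hpos x (Multiset.mem_of_mem_erase hx)
  · obtain ⟨hwmem, -, -, -, -⟩ := caseC_facts hpos hPA hne hA hB
    intro x hx
    rcases Multiset.mem_cons.mp hx with rfl | hx
    · exact hpos _ (Multiset.mem_of_mem_erase hwmem)
    · rcases Multiset.mem_add.mp hx with hx | hx
      · rw [Multiset.mem_replicate] at hx
        omega
      · exact hpos x (Multiset.mem_of_mem_erase hx)

lemma fM_sum (hpos : ∀ x ∈ s, 0 < x) (hPA : PAm s) (hne : s ≠ 0) :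
    (fM s).sum = s.sum + 1 := by
  unfold fM
  split_ifs with hA hB
  · rw [Multiset.sum_cons]; omega
  · rw [Multiset.sum_cons]
    have := sum_erase_mx (s := s) hne
    omega
  · obtain ⟨hwmem, -, -, hkey, -⟩ := caseC_facts hpos hPA hne hA hB
    rw [Multiset.sum_cons, Multiset.sum_add, Multiset.sum_replicate, smul_eq_mul]
    have := sum_erase_mx (s := s) hne
    omega

lemma oddEvenSucc (t : ℕ) : Odd t ↔ Even (t + 1) := by
  rw [Nat.odd_iff, Nat.even_iff]; omega

lemma fM_PA (hpos : ∀ x ∈ s, 0 < x) (hPA : PAm s) (hne : s ≠ 0) :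
    PAm (fM s) := by
  unfold fM
  split_ifs with hA hB
  · -- Case A : add a part 1
    intro a ha b hb hab hmid
    by_cases has : a ∈ s
    · have hbs : b ∈ s := by
        rcases Multiset.mem_cons.mp hb with rfl | hb
        · exact absurd (hpos a has) (by omega)
        · exact hb
      exact hPA a has b hbs hab (fun c hc => hmid c (Multiset.mem_cons_of_mem hc))
    · have ha1 : a = 1 := by
        rcases Multiset.mem_cons.mp ha with rfl | h
        · rfl
        · exact absurd h has
      subst ha1
      have h1s : (1 : ℕ) ∉ s := has
      rcases hA with h1 | ⟨x, hxs, hxe, hxmin⟩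
      · exact absurd h1 h1s
      · have hbs : b ∈ s := by
          rcases Multiset.mem_cons.mp hb with rfl | hb
          · omega
          · exact hb
        have hx1 : 1 < x := by
          have h0 := hpos x hxs
          by_contra hcon
          push_neg at hcon
          have hx1' : x = 1 := by omega
          rw [hx1'] at hxs
          exact h1s hxs
        have hxb : x = b := by
          have hnm := hmid x (Multiset.mem_cons_of_mem hxs)
          have hxleb := hxmin b hbs
          by_contra hne'
          exact hnm ⟨hx1, lt_of_le_of_ne hxleb hne'⟩
        exact iff_of_true odd_one (hxb ▸ hxe)
  · -- Case B : bump one copy of the largest part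
    obtain ⟨htmem, htle⟩ := mx_spec hne
    unfold condB at hB
    set t := mx s with hts
    intro a ha b hb hab hmid
    rcases Multiset.mem_cons.mp ha with rfl | hae
    · -- a = t+1 : impossible since b > a
      exfalso
      rcases Multiset.mem_cons.mp hb with rfl | hbe
      · omega
      · have := htle b (Multiset.mem_of_mem_erase hbe)
        omega
    · rcases Multiset.mem_cons.mp hb with rfl | hbe
      · -- b = t + 1, show a = t
        have hat : a = t := by
          have hale : a ≤ t := htle a (Multiset.mem_of_mem_erase hae)
          rcases hB with hc2 | hc1
          · have hte : t ∈ s.erase t := by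
              rw [← Multiset.count_pos, Multiset.count_erase_self]
              omega
            have := hmid t (Multiset.mem_cons_of_mem hte)
            rcases Nat.lt_or_ge a t with h | h
            · exact absurd ⟨h, by omega⟩ this
            · omega
          · obtain ⟨z, hz⟩ := Finset.card_eq_one.mp hc1
            have hzt : t = z := by
              have := Multiset.mem_toFinset.mpr htmem
              rw [hz] at this
              exact Finset.mem_singleton.mp this
            have : a = z := by
              have := Multiset.mem_toFinset.mpr (Multiset.mem_of_mem_erase hae)
              rw [hz] at this
              exact Finset.mem_singleton.mp this
            omega
        subst hat
        exact oddEvenSucc _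
      · -- a, b both in erase : transfer to s
        apply hPA a (Multiset.mem_of_mem_erase hae) b (Multiset.mem_of_mem_erase hbe) hab
        intro c hc ⟨h1, h2⟩
        have hbt : b ≤ t := htle b (Multiset.mem_of_mem_erase hbe)
        have hct : c ≠ t := by omega
        have : c ∈ s.erase t := (Multiset.mem_erase_of_ne hct).mpr hc
        exact hmid c (Multiset.mem_cons_of_mem this) ⟨h1, h2⟩
  · -- Case C
    obtain ⟨hwmem, hwle, hwt, hkey, hd1⟩ := caseC_facts hpos hPA hne hA hB
    obtain ⟨m, hms, hmin, hmodd, hm3⟩ := notA_min hpos hne hA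
    have h3 := three_le hpos hne hA
    set t := mx s with hts
    set e := s.erase t with hes
    set w := mx e with hws
    set d := (t + 1 - w) / 2 with hds
    have hmem : ∀ x ∈ (w ::ₘ (Multiset.replicate d 2 + e)),
        x = 2 ∨ (x ∈ s ∧ x ≤ w) := by
      intro x hx
      rcases Multiset.mem_cons.mp hx with rfl | hx
      · exact Or.inr ⟨Multiset.mem_of_mem_erase hwmem, le_refl _⟩
      · rcases Multiset.mem_add.mp hx with hx | hx
        · rw [Multiset.mem_replicate] at hx
          exact Or.inl hx.2
        · exact Or.inr ⟨Multiset.mem_of_mem_erase hx, hwle x hx⟩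
    intro a ha b hb hab hmid
    rcases hmem b hb with rfl | ⟨hbs, hbw⟩
    · -- b = 2 : impossible
      exfalso
      rcases hmem a ha with rfl | ⟨has, -⟩
      · omega
      · have := h3 a has
        omega
    · rcases hmem a ha with rfl | ⟨has, -⟩
      · -- a = 2 : b must be the minimum m of s, which is odd
        have hbm : b = m := by
          have hmw : m ≤ w := hmin w (Multiset.mem_of_mem_erase hwmem)
          have hmt : m ≠ t := by omega
          have hme : m ∈ e := (Multiset.mem_erase_of_ne hmt).mpr hms
          have hnm := hmid m (Multiset.mem_cons_of_mem (Multiset.mem_add.mpr (Or.inr hme)))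
          have hm2 : 2 < m := by omega
          have : ¬ (m < b) := fun h => hnm ⟨hm2, h⟩
          have := hmin b hbs
          omega
        subst hbm
        apply iff_of_false
        · decide
        · rw [Nat.even_iff]
          rw [Nat.odd_iff] at hmodd
          omega
      · -- both in s, below w < t
        apply hPA a has b hbs hab
        intro c hc ⟨h1, h2⟩
        have hct : c ≠ t := by omega
        have : c ∈ e := (Multiset.mem_erase_of_ne hct).mpr hc
        exact hmid c (Multiset.mem_cons_of_mem (Multiset.mem_add.mpr (Or.inr this))) ⟨h1, h2⟩

lemma gM_fM (hpos : ∀ x ∈ s, 0 < x) (hPA : PAm s) (hne : s ≠ 0) :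
    gM (fM s) = s := by
  unfold fM
  split_ifs with hA hB
  · unfold gM
    rw [if_pos (Multiset.mem_cons_self 1 s), Multiset.erase_cons_head]
  · -- Case B
    have h3 := three_le hpos hne hA
    obtain ⟨htmem, htle⟩ := mx_spec hne
    set t := mx s with hts
    set q := (t + 1) ::ₘ s.erase t with hqs
    have ht3 : 3 ≤ t := h3 t htmem
    have hmemq : ∀ x ∈ q, x = t + 1 ∨ (3 ≤ x ∧ x ≤ t) := by
      intro x hx
      rcases Multiset.mem_cons.mp hx with rfl | hx
      · exact Or.inl rfl
      · exact Or.inr ⟨h3 x (Multiset.mem_of_mem_erase hx),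
          htle x (Multiset.mem_of_mem_erase hx)⟩
    have h1q : (1 : ℕ) ∉ q := by
      intro h
      rcases hmemq 1 h with h | h <;> omega
    have h2q : (2 : ℕ) ∉ q := by
      intro h
      rcases hmemq 2 h with h | h <;> omega
    have hqne : q ≠ 0 := by
      intro h
      have := Multiset.mem_cons_self (t + 1) (s.erase t)
      rw [← hqs, h] at this
      exact Multiset.notMem_zero _ this
    have hmxq : mx q = t + 1 := by
      obtain ⟨hm1, hm2⟩ := mx_spec hqne
      apply le_antisymm
      · rcases hmemq _ hm1 with h | h
        · omega
        · omega
      · exact hm2 (t + 1) (Multiset.mem_cons_self _ _)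
    unfold gM
    rw [if_neg h1q, if_neg h2q, hmxq]
    have : q.erase (t + 1) = s.erase t := by
      rw [hqs, Multiset.erase_cons_head]
    rw [this]
    have : t + 1 - 1 = t := by omega
    rw [this, Multiset.cons_erase htmem]
  · -- Case C
    have h3 := three_le hpos hne hA
    obtain ⟨hwmem, hwle, hwt, hkey, hd1⟩ := caseC_facts hpos hPA hne hA hB
    obtain ⟨htmem, htle⟩ := mx_spec hne
    set t := mx s with hts
    set e := s.erase t with hes
    set w := mx e with hws
    set d := (t + 1 - w) / 2 with hds
    set q := w ::ₘ (Multiset.replicate d 2 + e) with hqs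
    have hw3 : 3 ≤ w := h3 w (Multiset.mem_of_mem_erase hwmem)
    have hmemq : ∀ x ∈ q, x = 2 ∨ (3 ≤ x ∧ x ≤ w) := by
      intro x hx
      rcases Multiset.mem_cons.mp hx with rfl | hx
      · exact Or.inr ⟨hw3, le_refl _⟩
      · rcases Multiset.mem_add.mp hx with hx | hx
        · rw [Multiset.mem_replicate] at hx
          exact Or.inl hx.2
        · exact Or.inr ⟨h3 x (Multiset.mem_of_mem_erase hx), hwle x hx⟩
    have h1q : (1 : ℕ) ∉ q := by
      intro h
      rcases hmemq 1 h with h | h <;> omega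
    have h2q : (2 : ℕ) ∈ q := by
      apply Multiset.mem_cons_of_mem
      apply Multiset.mem_add.mpr (Or.inl _)
      rw [Multiset.mem_replicate]
      exact ⟨by omega, rfl⟩
    have hqne : q ≠ 0 := by
      intro h
      rw [h] at h2q
      exact Multiset.notMem_zero _ h2q
    have hmxq : mx q = w := by
      obtain ⟨hm1, hm2⟩ := mx_spec hqne
      apply le_antisymm
      · rcases hmemq _ hm1 with h | h
        · omega
        · exact h.2
      · exact hm2 w (Multiset.mem_cons_self _ _)
    have hcount : q.count 2 = d := by
      rw [hqs, Multiset.count_cons]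
      have h2w : ¬ ((2 : ℕ) = w) := by omega
      rw [Multiset.count_add, Multiset.count_replicate, if_pos rfl]
      have : e.count 2 = 0 := by
        rw [Multiset.count_eq_zero]
        intro h2e
        have := h3 2 (Multiset.mem_of_mem_erase h2e)
        omega
      simp [this, h2w]
    unfold gM
    rw [if_neg h1q, if_pos h2q, hmxq, hcount]
    have herase : q.erase w = Multiset.replicate d 2 + e := by
      rw [hqs, Multiset.erase_cons_head]
    rw [herase]
    have hfilter : (Multiset.replicate d 2 + e).filter (· ≠ 2) = e := by
      rw [Multiset.filter_add]
      have h1 : (Multiset.replicate d 2).filter (· ≠ 2) = 0 := by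
        rw [Multiset.filter_eq_nil]
        intro a ha
        rw [Multiset.mem_replicate] at ha
        simp [ha.2]
      have h2 : e.filter (· ≠ 2) = e := by
        rw [Multiset.filter_eq_self]
        intro a ha
        have := h3 a (Multiset.mem_of_mem_erase ha)
        omega
      rw [h1, h2, zero_add]
    rw [hfilter]
    have hval : w + 2 * d - 1 = t := by omega
    rw [hval, Multiset.cons_erase htmem]

lemma fM_ne_rep (hpos : ∀ x ∈ s, 0 < x) (hPA : PAm s) (hne : s ≠ 0) (k : ℕ) :
    fM s ≠ Multiset.replicate k 2 := by
  intro heq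
  unfold fM at heq
  split_ifs at heq with hA hB
  · have : (1 : ℕ) ∈ Multiset.replicate k 2 := heq ▸ Multiset.mem_cons_self 1 s
    rw [Multiset.mem_replicate] at this
    omega
  · obtain ⟨htmem, -⟩ := mx_spec hne
    have ht3 := three_le hpos hne hA (mx s) htmem
    have : mx s + 1 ∈ Multiset.replicate k 2 := heq ▸ Multiset.mem_cons_self _ _
    rw [Multiset.mem_replicate] at this
    omega
  · obtain ⟨hwmem, -, -, -, -⟩ := caseC_facts hpos hPA hne hA hB
    have hw3 := three_le hpos hne hA _ (Multiset.mem_of_mem_erase hwmem)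
    have : mx (s.erase (mx s)) ∈ Multiset.replicate k 2 :=
      heq ▸ Multiset.mem_cons_self _ _
    rw [Multiset.mem_replicate] at this
    omega

lemma fM_ne_threerep (hpos : ∀ x ∈ s, 0 < x) (hPA : PAm s) (hne : s ≠ 0) (k : ℕ) :
    fM s ≠ 3 ::ₘ Multiset.replicate k 2 := by
  intro heq
  have hmem32 : ∀ x ∈ (3 ::ₘ Multiset.replicate k 2), x = 3 ∨ x = 2 := by
    intro x hx
    rcases Multiset.mem_cons.mp hx with rfl | hx
    · exact Or.inl rfl
    · rw [Multiset.mem_replicate] at hx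
      exact Or.inr hx.2
  unfold fM at heq
  split_ifs at heq with hA hB
  · have : (1 : ℕ) ∈ 3 ::ₘ Multiset.replicate k 2 := heq ▸ Multiset.mem_cons_self 1 s
    rcases hmem32 1 this with h | h <;> omega
  · obtain ⟨htmem, -⟩ := mx_spec hne
    have ht3 := three_le hpos hne hA (mx s) htmem
    have : mx s + 1 ∈ 3 ::ₘ Multiset.replicate k 2 := heq ▸ Multiset.mem_cons_self _ _
    rcases hmem32 _ this with h | h <;> omega
  · obtain ⟨hwmem, hwle, hwt, hkey, hd1⟩ := caseC_facts hpos hPA hne hA hB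
    set t := mx s with hts
    set e := s.erase t with hes
    set w := mx e with hws
    set d := (t + 1 - w) / 2 with hds
    have hw3 := three_le hpos hne hA w (Multiset.mem_of_mem_erase hwmem)
    have hwq : w ∈ 3 ::ₘ Multiset.replicate k 2 := heq ▸ Multiset.mem_cons_self _ _
    have hw3' : w = 3 := by
      rcases hmem32 w hwq with h | h <;> omega
    -- count 3 on the left is at least 2, on the right it is 1
    have hcl : 2 ≤ Multiset.count 3 (w ::ₘ (Multiset.replicate d 2 + e)) := by
      rw [Multiset.count_cons, Multiset.count_add]
      have h1 : 0 < e.count 3 := by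
        rw [Multiset.count_pos, ← hw3']
        exact hwmem
      have h2 : ((3 : ℕ) = w) := hw3'.symm
      simp only [if_pos h2]
      omega
    have hcr : Multiset.count 3 (3 ::ₘ Multiset.replicate k 2) = 1 := by
      rw [Multiset.count_cons, Multiset.count_replicate]
      norm_num
    rw [heq] at hcl
    omega

end Main

end PAaux

open PAaux

/-- The number of unlimited parity alternating partitions of `n`. -/
noncomputable def pa (n : ℕ) : ℕ := Nat.card {p : n.Partition // ParityAlternating p}

theorem pa_strict_mono (n : ℕ) (hn : 1 ≤ n) : pa n < pa (n + 1) := by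
  classical
  -- basic facts about any parity alternating partition of n
  have hne : ∀ p : n.Partition, p.parts ≠ 0 := by
    intro p h
    have := p.parts_sum
    rw [h] at this
    simp at this
    omega
  -- the injection
  have hF : ∀ p : {p : n.Partition // ParityAlternating p},
      ((fM p.1.parts).sum = n + 1) ∧ (∀ x ∈ fM p.1.parts, 0 < x) ∧ PAm (fM p.1.parts) := by
    intro ⟨p, hp⟩
    have hpos : ∀ x ∈ p.parts, 0 < x := fun x hx => p.parts_pos hx
    have hPA : PAm p.parts := hp
    refine ⟨?_, fM_pos hpos hPA (hne p), fM_PA hpos hPA (hne p)⟩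
    rw [fM_sum hpos hPA (hne p), p.parts_sum]
  let F : {p : n.Partition // ParityAlternating p} →
      {q : (n + 1).Partition // ParityAlternating q} :=
    fun p => ⟨⟨fM p.1.parts, fun {i} hi => (hF p).2.1 i hi, (hF p).1⟩, (hF p).2.2⟩
  have hFinj : Function.Injective F := by
    intro x y hxy
    have hparts : fM x.1.parts = fM y.1.parts := by
      have := congrArg (fun z => z.1.parts) hxy
      exact this
    have hx : PAm x.1.parts := x.2
    have hy : PAm y.1.parts := y.2
    have h1 : gM (fM x.1.parts) = x.1.parts :=
      gM_fM (fun a ha => x.1.parts_pos ha) hx (hne x.1)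
    have h2 : gM (fM y.1.parts) = y.1.parts :=
      gM_fM (fun a ha => y.1.parts_pos ha) hy (hne y.1)
    apply Subtype.ext
    apply Nat.Partition.ext
    rw [← h1, ← h2, hparts]
  -- the missed element
  have hq0 : ∃ q0 : {q : (n + 1).Partition // ParityAlternating q}, q0 ∉ Set.range F := by
    rcases Nat.even_or_odd (n + 1) with hpar | hpar
    · -- q0 = replicate ((n+1)/2) 2
      have hq0sum : (Multiset.replicate ((n + 1) / 2) 2).sum = n + 1 := by
        rw [Multiset.sum_replicate, smul_eq_mul]
        rw [Nat.even_iff] at hpar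
        omega
      have hq0pos : ∀ {i : ℕ}, i ∈ Multiset.replicate ((n + 1) / 2) 2 → 0 < i := by
        intro i hi
        rw [Multiset.mem_replicate] at hi
        omega
      have hq0PA : ParityAlternating (⟨_, hq0pos, hq0sum⟩ : (n + 1).Partition) := by
        intro a ha b hb hab hmid
        exfalso
        simp only [Multiset.mem_replicate] at ha hb
        omega
      refine ⟨⟨⟨_, hq0pos, hq0sum⟩, hq0PA⟩, ?_⟩
      rintro ⟨x, hx⟩
      have hparts : fM x.1.parts = Multiset.replicate ((n + 1) / 2) 2 := by
        have := congrArg (fun z => z.1.parts) hx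
        exact this
      exact fM_ne_rep (fun a ha => x.1.parts_pos ha) x.2 (hne x.1) _ hparts
    · -- q0 = 3 ::ₘ replicate ((n-2)/2) 2
      have hn2 : 2 ≤ n ∧ n % 2 = 0 := by
        rw [Nat.odd_iff] at hpar
        omega
      have hq0sum : (3 ::ₘ Multiset.replicate ((n - 2) / 2) 2).sum = n + 1 := by
        rw [Multiset.sum_cons, Multiset.sum_replicate, smul_eq_mul]
        omega
      have hq0pos : ∀ {i : ℕ}, i ∈ 3 ::ₘ Multiset.replicate ((n - 2) / 2) 2 → 0 < i := by
        intro i hi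
        rcases Multiset.mem_cons.mp hi with rfl | hi
        · omega
        · rw [Multiset.mem_replicate] at hi
          omega
      have hq0PA : ParityAlternating (⟨_, hq0pos, hq0sum⟩ : (n + 1).Partition) := by
        intro a ha b hb hab hmid
        simp only [Multiset.mem_cons, Multiset.mem_replicate] at ha hb
        have ha' : a = 3 ∨ a = 2 := by tauto
        have hb' : b = 3 ∨ b = 2 := by tauto
        have : a = 2 ∧ b = 3 := by omega
        rw [this.1, this.2]
        decide
      refine ⟨⟨⟨_, hq0pos, hq0sum⟩, hq0PA⟩, ?_⟩
      rintro ⟨x, hx⟩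
      have hparts : fM x.1.parts = 3 ::ₘ Multiset.replicate ((n - 2) / 2) 2 := by
        have := congrArg (fun z => z.1.parts) hx
        exact this
      exact fM_ne_threerep (fun a ha => x.1.parts_pos ha) x.2 (hne x.1) _ hparts
  obtain ⟨q0, hq0'⟩ := hq0
  haveI : Fintype {p : n.Partition // ParityAlternating p} := Fintype.ofFinite _
  haveI : Fintype {q : (n + 1).Partition // ParityAlternating q} := Fintype.ofFinite _
  rw [pa, pa, Nat.card_eq_fintype_card, Nat.card_eq_fintype_card]
  exact Fintype.card_lt_of_injective_of_notMem F hFinj hq0'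
end

section
/- For every positive integer n, pa(n) = p_o*(n); that is, the number of unlimited parity alternating partitions of n equals the number of partitions of n in which every part size other than the largest one occurs an odd number of times. -/
open YoungDiagram

section Abstract

variable {r c : ℕ → ℕ}

private lemma anti_of_dual (H : ∀ i j, j < r i ↔ i < c j) {i i' : ℕ} (h : i ≤ i') :
    r i' ≤ r i := by
  by_contra hlt
  push_neg at hlt
  have h1 : i' < c (r i) := (H i' (r i)).1 hlt
  have h2 : ¬ (r i < r i) := lt_irrefl _
  rw [H i (r i)] at h2
  omega

private lemma mem_S (H : ∀ i j, j < r i ↔ i < c j) {a : ℕ} :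
    a ∈ Multiset.map r (Multiset.range (c 0)) ↔ 0 < a ∧ ∃ i, r i = a := by
  simp only [Multiset.mem_map, Multiset.mem_range]
  constructor
  · rintro ⟨i, hi, rfl⟩
    exact ⟨(H i 0).2 hi, i, rfl⟩
  · rintro ⟨ha, i, rfl⟩
    exact ⟨i, (H i 0).1 ha, rfl⟩

private lemma paS_iff (H : ∀ i j, j < r i ↔ i < c j) :
    (∀ a ∈ Multiset.map r (Multiset.range (c 0)), ∀ b ∈ Multiset.map r (Multiset.range (c 0)),
      a < b → (∀ x ∈ Multiset.map r (Multiset.range (c 0)), ¬(a < x ∧ x < b)) →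
        (Odd a ↔ Even b)) ↔
    (∀ i, 0 < r (i + 1) → r (i + 1) < r i → Odd (r i - r (i + 1))) := by
  constructor
  · intro hPA i h1 h2
    have ha : r (i+1) ∈ Multiset.map r (Multiset.range (c 0)) := (mem_S H).2 ⟨h1, i+1, rfl⟩
    have hb : r i ∈ Multiset.map r (Multiset.range (c 0)) := (mem_S H).2 ⟨by omega, i, rfl⟩
    have hno : ∀ x ∈ Multiset.map r (Multiset.range (c 0)), ¬(r (i+1) < x ∧ x < r i) := by
      rintro x hx ⟨hx1, hx2⟩
      obtain ⟨-, i'', rfl⟩ := (mem_S H).1 hx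
      have hi'' : i'' < i + 1 := by
        by_contra hcc; push_neg at hcc
        exact absurd (anti_of_dual H hcc) (by omega)
      have : r i ≤ r i'' := anti_of_dual H (by omega)
      omega
    have key := hPA _ ha _ hb h2 hno
    rw [Nat.odd_iff, Nat.even_iff] at key
    rw [Nat.odd_iff]
    omega
  · intro hR a ha b hb hab hno
    obtain ⟨hapos, i', rfl⟩ := (mem_S H).1 ha
    obtain ⟨hbpos, i, rfl⟩ := (mem_S H).1 hb
    have hicc : i < c 0 := (H i 0).1 hbpos
    have hne : (Finset.filter (fun k => r k = r i) (Finset.range (c 0))).Nonempty :=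
      ⟨i, Finset.mem_filter.2 ⟨Finset.mem_range.2 hicc, rfl⟩⟩
    obtain ⟨hmlt, hmax⟩ := Finset.mem_filter.1 (Finset.max'_mem _ hne)
    set imax := (Finset.filter (fun k => r k = r i) (Finset.range (c 0))).max' hne with himax
    have h3 : r (imax + 1) < r i := by
      have hle : r (imax + 1) ≤ r imax := anti_of_dual H (Nat.le_succ _)
      rcases lt_or_eq_of_le hle with h | h
      · omega
      · exfalso
        have hmem1 : imax + 1 ∈ Finset.filter (fun k => r k = r i) (Finset.range (c 0)) :=
          Finset.mem_filter.2 ⟨Finset.mem_range.2 (by rw [← H (imax+1) 0]; omega), by omega⟩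
        have := Finset.le_max' _ _ hmem1
        omega
    have h4 : r i' ≤ r (imax + 1) := by
      have hii' : imax < i' := by
        by_contra hcc; push_neg at hcc
        have := anti_of_dual H hcc
        omega
      exact anti_of_dual H (by omega)
    have h5 : r (imax + 1) = r i' := by
      by_contra hcc
      have hx : r (imax+1) ∈ Multiset.map r (Multiset.range (c 0)) :=
        (mem_S H).2 ⟨by omega, imax+1, rfl⟩
      exact hno _ hx ⟨by omega, h3⟩
    have key := hR imax (by omega) (by omega)
    rw [Nat.odd_iff] at key
    rw [Nat.odd_iff, Nat.even_iff]
    omega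

private lemma count_T (H : ∀ i j, j < r i ↔ i < c j) (m : ℕ) :
    Multiset.count (m + 1) (Multiset.map c (Multiset.range (r 0))) = r m - r (m + 1) := by
  rw [Multiset.count_map]
  have heq : Multiset.filter (fun a => m + 1 = c a) (Multiset.range (r 0))
      = (Finset.Ico (r (m+1)) (r m)).val := by
    have h0 : Multiset.range (r 0) = (Finset.range (r 0)).val := rfl
    rw [h0, ← Finset.filter_val]
    congr 1
    ext j
    simp only [Finset.mem_filter, Finset.mem_range, Finset.mem_Ico]
    have h1 := H m j
    have h2 := H (m+1) j
    have h3 := H 0 j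
    omega
  rw [heq]
  exact Nat.card_Ico _ _

private lemma omeT_iff (H : ∀ i j, j < r i ↔ i < c j) :
    (∀ a ∈ Multiset.map c (Multiset.range (r 0)),
        (∃ b ∈ Multiset.map c (Multiset.range (r 0)), a < b) →
        Odd (Multiset.count a (Multiset.map c (Multiset.range (r 0))))) ↔
    (∀ i, 0 < r (i + 1) → r (i + 1) < r i → Odd (r i - r (i + 1))) := by
  have H' : ∀ j i, i < c j ↔ j < r i := fun j i => (H i j).symm
  constructor
  · intro h m h1 h2
    have hc := count_T H m
    have hmem : m + 1 ∈ Multiset.map c (Multiset.range (r 0)) := by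
      rw [← Multiset.count_pos, hc]; omega
    have hr0 : 0 < r 0 := lt_of_lt_of_le h1 (anti_of_dual H (Nat.zero_le _))
    have hb : c 0 ∈ Multiset.map c (Multiset.range (r 0)) :=
      Multiset.mem_map.2 ⟨0, Multiset.mem_range.2 hr0, rfl⟩
    have hlt : m + 1 < c 0 := (H (m+1) 0).1 h1
    have := h _ hmem ⟨c 0, hb, hlt⟩
    rwa [hc] at this
  · intro hR a ha hb
    obtain ⟨b, hbmem, hab⟩ := hb
    obtain ⟨j, hj, rfl⟩ := Multiset.mem_map.1 ha
    rw [Multiset.mem_range] at hj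
    have hpos : 0 < c j := (H' j 0).2 hj
    obtain ⟨m, hm⟩ : ∃ m, c j = m + 1 := ⟨c j - 1, by omega⟩
    obtain ⟨j', hj', rfl⟩ := Multiset.mem_map.1 hbmem
    rw [Multiset.mem_range] at hj'
    have hble : c j' ≤ c 0 := anti_of_dual H' (Nat.zero_le _)
    have h1 : 0 < r (m + 1) := (H (m+1) 0).2 (by omega)
    have hcount := count_T H m
    have hcpos : 0 < Multiset.count (c j) (Multiset.map c (Multiset.range (r 0))) :=
      Multiset.count_pos.2 ha
    rw [hm] at hcpos ⊢
    rw [hcount] at hcpos ⊢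
    exact hR m h1 (by omega)

private lemma sum_range_eq (f : ℕ → ℕ) (N M : ℕ) (hf : ∀ j, j < N → f j ≤ M) :
    ∑ j ∈ Finset.range N, f j
      = ∑ j ∈ Finset.range N, ∑ i ∈ Finset.range M, if i < f j then 1 else 0 := by
  apply Finset.sum_congr rfl
  intro j hj
  rw [← Finset.card_filter]
  have : (Finset.range M).filter (· < f j) = Finset.range (f j) := by
    ext i
    simp only [Finset.mem_filter, Finset.mem_range]
    have := hf j (Finset.mem_range.1 hj)
    omega
  rw [this, Finset.card_range]

private lemma sum_swap_lemma (H : ∀ i j, j < r i ↔ i < c j) :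
    (Multiset.map c (Multiset.range (r 0))).sum = (Multiset.map r (Multiset.range (c 0))).sum := by
  have H' : ∀ j i, i < c j ↔ j < r i := fun j i => (H i j).symm
  have h1 : (Multiset.map c (Multiset.range (r 0))).sum = ∑ j ∈ Finset.range (r 0), c j := rfl
  have h2 : (Multiset.map r (Multiset.range (c 0))).sum = ∑ i ∈ Finset.range (c 0), r i := rfl
  rw [h1, h2,
    sum_range_eq c (r 0) (c 0) (fun j _ => anti_of_dual H' (Nat.zero_le _)),
    sum_range_eq r (c 0) (r 0) (fun i _ => anti_of_dual H (Nat.zero_le _)),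
    Finset.sum_comm]
  apply Finset.sum_congr rfl
  intro i _
  apply Finset.sum_congr rfl
  intro j _
  exact if_congr (H i j).symm rfl rfl

end Abstract

section Diagram

/-- The Young diagram of a partition. -/
def toD {n : ℕ} (p : n.Partition) : YoungDiagram :=
  ofRowLens (p.parts.sort (· ≥ ·)) (p.parts.pairwise_sort _).sortedGE

lemma rowLens_toD {n : ℕ} (p : n.Partition) :
    (toD p).rowLens = p.parts.sort (· ≥ ·) :=
  rowLens_ofRowLens_eq_self (fun _ hx => p.parts_pos ((Multiset.mem_sort _).1 hx))

lemma coe_rowLens_toD {n : ℕ} (p : n.Partition) :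
    ((toD p).rowLens : Multiset ℕ) = p.parts := by
  rw [rowLens_toD]; exact p.parts.sort_eq _

lemma ofRowLens_congr (w w' : List ℕ) (hw : w.SortedGE) (hw' : w'.SortedGE)
    (h : w = w') : ofRowLens w hw = ofRowLens w' hw' := by subst h; rfl

lemma toD_eq {n : ℕ} (μ : YoungDiagram) (p : n.Partition) (h : p.parts = ↑μ.rowLens) :
    toD p = μ := by
  have hs : p.parts.sort (· ≥ ·) = μ.rowLens := by
    apply List.Perm.eq_of_pairwise' (p.parts.pairwise_sort _) μ.rowLens_sorted.pairwise ?_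
    rw [← Multiset.coe_eq_coe, ← h]
    exact p.parts.sort_eq _
  rw [toD, ofRowLens_congr _ _ _ μ.rowLens_sorted hs, ofRowLens_to_rowLens_eq_self]

lemma Hmu (μ : YoungDiagram) : ∀ i j, j < μ.rowLen i ↔ i < μ.colLen j := fun i j => by
  rw [← mem_iff_lt_rowLen, mem_iff_lt_colLen]

lemma coe_rowLens_eq (μ : YoungDiagram) :
    (↑μ.rowLens : Multiset ℕ) = Multiset.map μ.rowLen (Multiset.range (μ.colLen 0)) := by
  rw [YoungDiagram.rowLens]
  rfl

lemma coe_rowLens_transpose (μ : YoungDiagram) :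
    (↑μ.transpose.rowLens : Multiset ℕ)
      = Multiset.map μ.colLen (Multiset.range (μ.rowLen 0)) := by
  rw [coe_rowLens_eq, colLen_transpose]
  exact Multiset.map_congr rfl (fun i _ => rowLen_transpose μ i)

/-- Conjugate partition. -/
def conjP {n : ℕ} (p : n.Partition) : n.Partition where
  parts := ↑((toD p).transpose.rowLens)
  parts_pos := fun {i} hi => (toD p).transpose.pos_of_mem_rowLens i (by exact_mod_cast hi)
  parts_sum := by
    rw [coe_rowLens_transpose, sum_swap_lemma (Hmu (toD p)), ← coe_rowLens_eq,
      coe_rowLens_toD]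
    exact p.parts_sum

lemma conjP_parts {n : ℕ} (p : n.Partition) :
    (conjP p).parts = ↑((toD p).transpose.rowLens) := rfl

lemma conjP_conjP {n : ℕ} (p : n.Partition) : conjP (conjP p) = p := by
  have h1 : toD (conjP p) = (toD p).transpose := toD_eq _ _ rfl
  apply Nat.Partition.ext
  rw [conjP_parts, h1, transpose_transpose, coe_rowLens_toD]

end Diagram

/-- Every part size other than the largest occurs an odd number of times. -/
def OddMultExceptLargest {n : ℕ} (p : n.Partition) : Prop :=
  ∀ a ∈ p.parts, (∃ b ∈ p.parts, a < b) → Odd (Multiset.count a p.parts)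

/-- The number of partitions of `n` in which all distinct part sizes except possibly the
largest one appear an odd number of times. -/
noncomputable def poStar (n : ℕ) : ℕ := Nat.card {p : n.Partition // OddMultExceptLargest p}

lemma PA_iff {n : ℕ} (p : n.Partition) :
    ParityAlternating p ↔
      (∀ i, 0 < (toD p).rowLen (i + 1) → (toD p).rowLen (i + 1) < (toD p).rowLen i →
        Odd ((toD p).rowLen i - (toD p).rowLen (i + 1))) := by
  have hparts : p.parts = Multiset.map (toD p).rowLen (Multiset.range ((toD p).colLen 0)) := by
    rw [← coe_rowLens_toD p, coe_rowLens_eq]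
  unfold ParityAlternating
  rw [hparts]
  exact paS_iff (Hmu _)

lemma OME_conjP_iff {n : ℕ} (p : n.Partition) :
    OddMultExceptLargest (conjP p) ↔
      (∀ i, 0 < (toD p).rowLen (i + 1) → (toD p).rowLen (i + 1) < (toD p).rowLen i →
        Odd ((toD p).rowLen i - (toD p).rowLen (i + 1))) := by
  have hparts : (conjP p).parts
      = Multiset.map (toD p).colLen (Multiset.range ((toD p).rowLen 0)) := by
    rw [conjP_parts, coe_rowLens_transpose]
  unfold OddMultExceptLargest
  rw [hparts]
  exact omeT_iff (Hmu _)

theorem pa_eq_poStar (n : ℕ) (hn : 1 ≤ n) : pa n = poStar n := by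
  apply Nat.card_congr
  refine ⟨fun x => ⟨conjP x.1, ?_⟩, fun y => ⟨conjP y.1, ?_⟩, ?_, ?_⟩
  · exact (OME_conjP_iff x.1).2 ((PA_iff x.1).1 x.2)
  · have hy := y.2
    rw [← conjP_conjP y.1] at hy
    exact (PA_iff (conjP y.1)).2 ((OME_conjP_iff (conjP y.1)).1 hy)
  · intro x; exact Subtype.ext (conjP_conjP x.1)
  · intro y; exact Subtype.ext (conjP_conjP y.1)
end

section
/- For |q| < 1, ∑_{n≥1} pa(n) q^n = 2·∑_{n≥1} (((√5−1)/2; q)_n · (−(√5+1)/2; q)_n) / ((q;q)_n · (−1;q)_n) · q^n; equivalently, the generating function of pa(n) equals twice the basic hypergeometric sum with upper parameters (√5−1)/2 and −(√5+1)/2 and lower parameter −1, evaluated at argument q, minus its n = 0 term. -/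
/-- The finite q-Pochhammer symbol `(a; q)_n = ∏_{k=0}^{n-1} (1 - a q^k)`. -/
def qPoch (a q : ℂ) (n : ℕ) : ℂ := ∏ k ∈ Finset.range n, (1 - a * q ^ k)

set_option linter.unusedSectionVars false
set_option linter.unnecessarySimpa false
set_option linter.deprecated false

noncomputable section AuxPA


variable {K : Type*} [NormedField K] [CompleteSpace K]

def gOdd (c : ℕ) (x : K) : ℕ → K := fun e => if e = 0 ∨ Odd e then x ^ (c * e) else 0
def gPos (c : ℕ) (x : K) : ℕ → K := fun e => if 1 ≤ e then x ^ (c * e) else 0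

omit [CompleteSpace K] in
lemma pow_c_norm_lt_one {x : K} (hx : ‖x‖ < 1) {c : ℕ} (hc : 1 ≤ c) : ‖x ^ c‖ < 1 := by
  rw [norm_pow]
  calc ‖x‖ ^ c ≤ ‖x‖ ^ 1 := pow_le_pow_of_le_one (norm_nonneg x) hx.le hc
  _ = ‖x‖ := pow_one _
  _ < 1 := hx

omit [CompleteSpace K] in
lemma gOdd_norm_summable {x : K} (hx : ‖x‖ < 1) {c : ℕ} (hc : 1 ≤ c) :
    Summable fun e => ‖gOdd c x e‖ := by
  refine Summable.of_nonneg_of_le (fun e => norm_nonneg _) ?_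
    (summable_geometric_of_lt_one (norm_nonneg (x ^ c)) (pow_c_norm_lt_one hx hc))
  intro e
  unfold gOdd
  split
  · rw [pow_mul, norm_pow]
  · simpa using pow_nonneg (norm_nonneg (x ^ c)) e

omit [CompleteSpace K] in
lemma gPos_norm_summable {x : K} (hx : ‖x‖ < 1) {c : ℕ} (hc : 1 ≤ c) :
    Summable fun e => ‖gPos c x e‖ := by
  refine Summable.of_nonneg_of_le (fun e => norm_nonneg _) ?_
    (summable_geometric_of_lt_one (norm_nonneg (x ^ c)) (pow_c_norm_lt_one hx hc))
  intro e
  unfold gPos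
  split
  · rw [pow_mul, norm_pow]
  · simpa using pow_nonneg (norm_nonneg (x ^ c)) e

lemma gPos_tsum {x : K} (hx : ‖x‖ < 1) {c : ℕ} (hc : 1 ≤ c) :
    ∑' e, gPos c x e = x ^ c * (1 - x ^ c)⁻¹ := by
  have hs : Summable (gPos c x) := (gPos_norm_summable hx hc).of_norm
  rw [hs.tsum_eq_zero_add]
  have h0 : gPos c x 0 = 0 := by simp [gPos]
  have h1 : ∀ e, gPos c x (e + 1) = x ^ c * (x ^ c) ^ e := by
    intro e; simp only [gPos, if_pos (Nat.succ_le_succ (Nat.zero_le e))]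
    rw [mul_add, mul_one, pow_add, pow_mul, mul_comm]
  simp only [h0, h1, zero_add]
  rw [tsum_mul_left, tsum_geometric_of_norm_lt_one (pow_c_norm_lt_one hx hc)]

lemma gOdd_tsum {x : K} (hx : ‖x‖ < 1) {c : ℕ} (hc : 1 ≤ c) :
    ∑' e, gOdd c x e = 1 + x ^ c * (1 - x ^ (2 * c))⁻¹ := by
  have hs : Summable (gOdd c x) := (gOdd_norm_summable hx hc).of_norm
  rw [hs.tsum_eq_zero_add]
  have h0 : gOdd c x 0 = 1 := by simp [gOdd]
  rw [h0]
  congr 1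
  have key : ∀ i : ℕ, gOdd c x (2 * i + 1) = x ^ c * (x ^ (2 * c)) ^ i := by
    intro i
    have hodd : Odd (2 * i + 1) := ⟨i, by ring⟩
    simp only [gOdd, if_pos (Or.inr hodd)]
    rw [← pow_mul, ← pow_add]; ring_nf
  have hinj : Function.Injective (fun i : ℕ => 2 * i) := fun a b h => by
    simpa using h
  have hsupp : Function.support (fun e => gOdd c x (e + 1)) ⊆ Set.range (fun i : ℕ => 2 * i) := by
    intro e he
    simp only [Function.mem_support] at he
    rcases Nat.even_or_odd e with he' | he'
    · rcases he' with ⟨k, hk⟩; exact ⟨k, by simp; omega⟩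
    · exfalso; apply he
      have : ¬ (e + 1 = 0 ∨ Odd (e + 1)) := by
        rintro (h | h)
        · omega
        · rcases he' with ⟨k, hk⟩; rcases h with ⟨l, hl⟩; omega
      simp only [gOdd]; rw [if_neg this]
  have heq := hinj.tsum_eq (f := fun e => gOdd c x (e + 1)) hsupp
  rw [← heq]
  calc ∑' i, gOdd c x (2 * i + 1) = ∑' i, x ^ c * (x ^ (2*c)) ^ i := tsum_congr key
    _ = x ^ c * (1 - x ^ (2*c))⁻¹ := by
        rw [tsum_mul_left, tsum_geometric_of_norm_lt_one (pow_c_norm_lt_one hx (by omega))]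



lemma pi_tsum : ∀ (N : ℕ) (g : Fin N → ℕ → K), (∀ j, Summable fun e => ‖g j e‖) →
    (Summable fun δ : Fin N → ℕ => ‖∏ j, g j (δ j)‖) ∧
    (∑' δ : Fin N → ℕ, ∏ j, g j (δ j)) = ∏ j, ∑' e, g j e := by
  intro N
  induction N with
  | zero =>
    intro g hg
    constructor
    · exact .of_finite
    · simp
  | succ N ih =>
    intro g hg
    obtain ⟨ihS, ihT⟩ := ih (fun j => g j.succ) (fun j => hg j.succ)
    set P : (Fin N → ℕ) → K := fun δ => ∏ j, g j.succ (δ j) with hP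
    have hg0 : Summable fun e => ‖g 0 e‖ := hg 0
    have hprod : ∀ δ : Fin (N+1) → ℕ, ∏ j, g j (δ j) = g 0 (δ 0) * P (fun j => δ j.succ) := by
      intro δ; rw [Fin.prod_univ_succ]
    have hFnorm : Summable fun p : ℕ × (Fin N → ℕ) => ‖g 0 p.1 * P p.2‖ := by
      have := summable_mul_of_summable_norm (f := fun e => ‖g 0 e‖) (g := fun δ => ‖P δ‖)
        (by simpa only [norm_norm] using hg0) (by simpa only [norm_norm] using ihS)
      simpa [norm_mul] using this
    have hE := (Fin.consEquiv (fun _ : Fin (N+1) => ℕ)).tsum_eq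
      (f := fun δ : Fin (N+1) → ℕ => ∏ j, g j (δ j))
    constructor
    · rw [← (Fin.consEquiv (fun _ : Fin (N+1) => ℕ)).summable_iff
        (f := fun δ : Fin (N+1) → ℕ => ‖∏ j, g j (δ j)‖)]
      apply hFnorm.congr
      intro p
      simp only [Function.comp, Fin.consEquiv, Equiv.coe_fn_mk]
      rw [hprod (Fin.cons p.1 p.2)]
      simp [Fin.cons_zero, Fin.cons_succ]
    · rw [← hE]
      have : ∀ p : ℕ × (Fin N → ℕ),
          (∏ j, g j ((Fin.consEquiv (fun _ : Fin (N+1) => ℕ)) p j)) = g 0 p.1 * P p.2 := by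
        intro p
        simp only [Fin.consEquiv, Equiv.coe_fn_mk]
        rw [hprod (Fin.cons p.1 p.2)]
        simp [Fin.cons_zero, Fin.cons_succ]
      rw [tsum_congr this]
      rw [← tsum_mul_tsum_of_summable_norm hg0 ihS, ihT, Fin.prod_univ_succ]

def Adm (M : ℕ) (δ : Fin (M+1) → ℕ) : Prop :=
  (∀ j : Fin (M+1), (j:ℕ) < M → (δ j = 0 ∨ Odd (δ j))) ∧ 1 ≤ δ (Fin.last M)

instance (M : ℕ) : DecidablePred (Adm M) := fun _ => instDecidableAnd

def wgt (M : ℕ) (δ : Fin (M+1) → ℕ) : ℕ := ∑ j : Fin (M+1), ((j:ℕ) + 1) * δ j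

def GF (M : ℕ) (x : K) : Fin (M+1) → ℕ → K := fun j =>
  if (j:ℕ) < M then gOdd ((j:ℕ)+1) x else gPos ((j:ℕ)+1) x

def SM (x : K) (M : ℕ) : K :=
  (∏ j ∈ Finset.range M, (1 + x^(j+1) * (1 - x^(2*(j+1)))⁻¹)) * (x^(M+1) * (1 - x^(M+1))⁻¹)

lemma indicator_eq_prod (M : ℕ) (x : K) (δ : Fin (M+1) → ℕ) :
    (if Adm M δ then x ^ wgt M δ else 0) = ∏ j, GF M x j (δ j) := by
  by_cases h : Adm M δ
  · rw [if_pos h]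
    have : ∀ j : Fin (M+1), GF M x j (δ j) = x ^ (((j:ℕ)+1) * δ j) := by
      intro j
      by_cases hj : (j:ℕ) < M
      · have := h.1 j hj
        simp only [GF, if_pos hj, gOdd]
        rw [if_pos]
        rcases this with h0 | h0
        · exact Or.inl h0
        · exact Or.inr h0
      · have hlast : j = Fin.last M := by
          apply Fin.ext; have := j.isLt; simp; omega
        simp only [GF, if_neg hj, gPos]
        rw [if_pos]
        rw [hlast]; exact h.2
    rw [Finset.prod_congr rfl (fun j _ => this j)]
    rw [Finset.prod_pow_eq_pow_sum]
    rfl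
  · rw [if_neg h]
    unfold Adm at h
    push_neg at h
    by_cases h2 : 1 ≤ δ (Fin.last M)
    · have hc : ¬ ∀ j : Fin (M+1), (j:ℕ) < M → (δ j = 0 ∨ Odd (δ j)) := by
        intro hc; have := h hc; omega
      push_neg at hc
      obtain ⟨j, hj, hj2⟩ := hc
      refine (Finset.prod_eq_zero (Finset.mem_univ j) ?_).symm
      simp only [GF, if_pos hj, gOdd]
      rw [if_neg (by tauto)]
    · refine (Finset.prod_eq_zero (Finset.mem_univ (Fin.last M)) ?_).symm
      have : ¬ ((Fin.last M : ℕ) < M) := by simp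
      simp only [GF, if_neg this, gPos]
      rw [if_neg h2]


lemma GF_norm_summable (x : K) (hx : ‖x‖ < 1) (M : ℕ) (j : Fin (M+1)) :
    Summable fun e => ‖GF M x j e‖ := by
  unfold GF
  split
  · exact gOdd_norm_summable hx (by omega)
  · exact gPos_norm_summable hx (by omega)

lemma vm_summable (x : K) (hx : ‖x‖ < 1) (M : ℕ) :
    Summable fun δ : {δ : Fin (M+1) → ℕ // Adm M δ} => ‖x ^ wgt M δ.1‖ := by
  have h1 := (pi_tsum (M+1) (GF M x) (GF_norm_summable x hx M)).1
  have h2 : Summable fun δ : {δ : Fin (M+1) → ℕ // Adm M δ} => ‖∏ j, GF M x j (δ.1 j)‖ :=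
    h1.comp_injective Subtype.val_injective
  apply h2.congr
  intro δ
  have := indicator_eq_prod M x δ.1
  rw [if_pos δ.2] at this
  rw [← this]

lemma vm_tsum (x : K) (hx : ‖x‖ < 1) (M : ℕ) :
    ∑' δ : {δ : Fin (M+1) → ℕ // Adm M δ}, x ^ wgt M δ.1 = SM x M := by
  have step1 : ∑' δ : {δ : Fin (M+1) → ℕ // Adm M δ}, x ^ wgt M δ.1
      = ∑' δ : Fin (M+1) → ℕ, ∏ j, GF M x j (δ j) := by
    rw [← tsum_congr (indicator_eq_prod M x)]
    rw [← Function.Injective.tsum_eq (g := (Subtype.val : {δ : Fin (M+1) → ℕ // Adm M δ} → _))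
      Subtype.val_injective (f := fun δ => if Adm M δ then x ^ wgt M δ else 0) ?_]
    · exact tsum_congr (fun δ => by rw [if_pos δ.2])
    · intro δ hδ
      simp only [Function.mem_support] at hδ
      by_cases h : Adm M δ
      · exact ⟨⟨δ, h⟩, rfl⟩
      · exact absurd (if_neg h) hδ
  rw [step1, (pi_tsum (M+1) (GF M x) (GF_norm_summable x hx M)).2]
  rw [Fin.prod_univ_castSucc]
  have hlast : (∑' e, GF M x (Fin.last M) e) = x^(M+1) * (1 - x^(M+1))⁻¹ := by
    have h1 : GF M x (Fin.last M) = gPos (M+1) x := by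
      simp [GF]
    rw [h1, gPos_tsum hx (Nat.succ_le_succ (Nat.zero_le M))]
  have hcs : ∀ j : Fin M, (∑' e, GF M x j.castSucc e)
      = 1 + x^((j:ℕ)+1) * (1 - x^(2*((j:ℕ)+1)))⁻¹ := by
    intro j
    have h1 : GF M x j.castSucc = gOdd ((j:ℕ)+1) x := by
      simp [GF, j.isLt]
    rw [h1, gOdd_tsum hx (Nat.succ_le_succ (Nat.zero_le _))]
  rw [hlast, Finset.prod_congr rfl (fun j _ => hcs j)]
  unfold SM
  congr 1
  exact Fin.prod_univ_eq_prod_range (fun j => 1 + x^(j+1) * (1 - x^(2*(j+1)))⁻¹) M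

abbrev TT : Type := (M : ℕ) × {δ : Fin (M+1) → ℕ // Adm M δ}
def wT (t : TT) : ℕ := wgt t.1 t.2.1

def deltaExt (M : ℕ) (δ : Fin (M+1) → ℕ) : ℕ → ℕ :=
  fun j => if h : j < M+1 then δ ⟨j, h⟩ else 0

def Lam (M : ℕ) (δ : Fin (M+1) → ℕ) : ℕ → ℕ :=
  fun i => ∑ j ∈ Finset.Ico i (M+1), deltaExt M δ j

lemma Lam_anti (M : ℕ) (δ : Fin (M+1) → ℕ) {i i' : ℕ} (h : i ≤ i') :
    Lam M δ i' ≤ Lam M δ i :=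
  Finset.sum_le_sum_of_subset (Finset.Ico_subset_Ico h le_rfl)

lemma Lam_succ (M : ℕ) (δ : Fin (M+1) → ℕ) {i : ℕ} (h : i < M+1) :
    Lam M δ i = deltaExt M δ i + Lam M δ (i+1) := by
  unfold Lam
  rw [Finset.sum_eq_sum_Ico_succ_bot h]

lemma Lam_top (M : ℕ) (δ : Fin (M+1) → ℕ) : Lam M δ (M+1) = 0 := by
  unfold Lam; rw [Finset.Ico_self, Finset.sum_empty]

lemma Lam_pos (M : ℕ) (δ : Fin (M+1) → ℕ) (hAdm : Adm M δ) {i : ℕ} (h : i ≤ M) :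
    1 ≤ Lam M δ i := by
  have hmem : M ∈ Finset.Ico i (M+1) := by simp [Finset.mem_Ico]; omega
  have := Finset.single_le_sum (f := deltaExt M δ) (fun j _ => Nat.zero_le _) hmem
  have hd : deltaExt M δ M = δ (Fin.last M) := by
    simp [deltaExt, Fin.last]
  calc 1 ≤ δ (Fin.last M) := hAdm.2
  _ = deltaExt M δ M := hd.symm
  _ ≤ Lam M δ i := this

lemma Lam_sum (M : ℕ) (δ : Fin (M+1) → ℕ) :
    ∑ i ∈ Finset.range (M+1), Lam M δ i = wgt M δ := by
  unfold Lam
  rw [Finset.sum_comm' (s' := fun j => Finset.range (j+1)) (t' := Finset.range (M+1))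
    (by intro i j; simp [Finset.mem_Ico, Finset.mem_range]; omega)]
  have : ∀ j ∈ Finset.range (M+1), ∑ _i ∈ Finset.range (j+1), deltaExt M δ j
      = (j+1) * deltaExt M δ j := by
    intro j _; rw [Finset.sum_const, Finset.card_range, smul_eq_mul]
  rw [Finset.sum_congr rfl this]
  unfold wgt
  rw [Finset.sum_range (fun j => (j+1) * deltaExt M δ j)]
  apply Finset.sum_congr rfl
  intro j _
  have hj : (j:ℕ) < M + 1 := j.isLt
  simp [deltaExt, hj]

lemma wT_pos (t : TT) : 1 ≤ wT t := by
  obtain ⟨M, δ, hAdm⟩ := t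
  show 1 ≤ wgt M δ
  have hmem : Fin.last M ∈ Finset.univ := Finset.mem_univ _
  have := Finset.single_le_sum (f := fun j : Fin (M+1) => ((j:ℕ)+1) * δ j)
    (fun j _ => Nat.zero_le _) hmem
  calc 1 ≤ (M+1) * δ (Fin.last M) := by
        have := hAdm.2; nlinarith [hAdm.2]
  _ = ((Fin.last M : ℕ)+1) * δ (Fin.last M) := by simp [Fin.last]
  _ ≤ wgt M δ := this

-- the partition multiset
def PsiM (M : ℕ) (δ : Fin (M+1) → ℕ) : Multiset ℕ := (Multiset.range (M+1)).map (Lam M δ)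

lemma PsiM_mem {M : ℕ} {δ : Fin (M+1) → ℕ} {x : ℕ} :
    x ∈ PsiM M δ ↔ ∃ i < M+1, Lam M δ i = x := by
  unfold PsiM
  rw [Multiset.mem_map]
  constructor
  · rintro ⟨i, hi, h⟩; refine ⟨i, ?_, h⟩; simp only [Multiset.mem_range] at hi; omega
  · rintro ⟨i, hi, h⟩; refine ⟨i, ?_, h⟩; simp only [Multiset.mem_range]; omega

lemma PsiM_sum (M : ℕ) (δ : Fin (M+1) → ℕ) : (PsiM M δ).sum = wgt M δ := by
  rw [← Lam_sum M δ]
  rfl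

lemma PsiM_PA (M : ℕ) (δ : Fin (M+1) → ℕ) (hAdm : Adm M δ) :
    ∀ a ∈ PsiM M δ, ∀ b ∈ PsiM M δ, a < b →
    (∀ c ∈ PsiM M δ, ¬(a < c ∧ c < b)) → (Odd a ↔ Even b) := by
  intro a ha b hb hab hmid
  rw [PsiM_mem] at ha hb
  obtain ⟨ia, hia, hΛa⟩ := ha
  obtain ⟨ib, hib, hΛb⟩ := hb
  have hord : ib < ia := by
    by_contra h
    push_neg at h
    have := Lam_anti M δ h
    omega
  classical
  set P : ℕ → Prop := fun i => Lam M δ i = b with hP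
  have hPib : P ib := hΛb
  set i0 := Nat.findGreatest P (ia - 1) with hi0
  have hPi0 : P i0 := by
    rw [hi0]; exact Nat.findGreatest_spec (show ib ≤ ia - 1 by omega) hPib
  have hi0le : i0 ≤ ia - 1 := by
    rw [hi0]; exact Nat.findGreatest_le (ia - 1)
  have hi1le : i0 + 1 ≤ ia := by omega
  have hnext_lt : Lam M δ (i0+1) < b := by
    rcases Nat.lt_or_ge (i0+1) ia with h | h
    · have hnP : ¬ P (i0+1) :=
        Nat.findGreatest_is_greatest (n := ia - 1) (by rw [← hi0]; omega) (by omega)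
      have hle : Lam M δ (i0+1) ≤ b := hPi0 ▸ Lam_anti M δ (Nat.le_succ i0)
      rcases lt_or_eq_of_le hle with h' | h'
      · exact h'
      · exact absurd h' hnP
    · have : ia = i0 + 1 := by omega
      rw [← this, hΛa]; exact hab
  have hnext_ge : a ≤ Lam M δ (i0+1) := hΛa ▸ Lam_anti M δ hi1le
  have hmem : Lam M δ (i0+1) ∈ PsiM M δ := PsiM_mem.mpr ⟨i0+1, by omega, rfl⟩
  have heqa : Lam M δ (i0+1) = a := by
    by_contra h
    exact hmid _ hmem ⟨by omega, hnext_lt⟩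
  have hstep : Lam M δ i0 = deltaExt M δ i0 + Lam M δ (i0+1) := Lam_succ M δ (by omega)
  have hdelta : deltaExt M δ i0 = b - a := by
    rw [hPi0, heqa] at hstep; omega
  have hi0M : i0 < M := by omega
  have hodd : Odd (deltaExt M δ i0) := by
    have hd : deltaExt M δ i0 = δ ⟨i0, by omega⟩ := by
      simp only [deltaExt, dif_pos (show i0 < M+1 by omega)]
    rcases hAdm.1 ⟨i0, by omega⟩ (by simpa using hi0M) with h0 | h0
    · rw [hd, h0] at hdelta; omega
    · rw [hd]; exact h0
  rcases hodd with ⟨k, hk⟩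
  simp only [Nat.odd_iff, Nat.even_iff]
  omega

lemma PsiM_pos (M : ℕ) (δ : Fin (M+1) → ℕ) (hAdm : Adm M δ) :
    ∀ {x : ℕ}, x ∈ PsiM M δ → 0 < x := by
  intro x hx
  rw [PsiM_mem] at hx
  obtain ⟨i, hi, h⟩ := hx
  have := Lam_pos M δ hAdm (show i ≤ M by omega)
  omega

/-- The forward map from admissible vectors to parity alternating partitions. -/
def Psi (m : ℕ) (t : {t : TT // wT t = m}) : {p : m.Partition // ParityAlternating p} :=
  ⟨⟨PsiM t.1.1 t.1.2.1,
    fun {x} hx => PsiM_pos _ _ t.1.2.2 hx,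
    by rw [PsiM_sum]; exact t.2⟩,
   fun a ha b hb hab hmid => PsiM_PA _ _ t.1.2.2 a ha b hb hab hmid⟩

lemma listSorted (M : ℕ) (δ : Fin (M+1) → ℕ) :
    ((List.range (M+1)).map (Lam M δ)).Pairwise (· ≥ ·) := by
  rw [List.pairwise_map]
  have h := List.pairwise_lt_range (n := M+1)
  exact h.imp (fun hij => Lam_anti M δ (le_of_lt hij))

lemma PsiM_coe (M : ℕ) (δ : Fin (M+1) → ℕ) :
    PsiM M δ = ↑((List.range (M+1)).map (Lam M δ)) := by
  unfold PsiM
  rw [Multiset.range, Multiset.map_coe]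

lemma Psi_inj (m : ℕ) : Function.Injective (Psi m) := by
  rintro ⟨⟨M, δ, hAdm⟩, hw⟩ ⟨⟨M', δ', hAdm'⟩, hw'⟩ h
  have hparts : PsiM M δ = PsiM M' δ' := congrArg (fun p => p.1.parts) h
  rw [PsiM_coe, PsiM_coe, Multiset.coe_eq_coe] at hparts
  have hMM : M = M' := by
    have := hparts.length_eq
    simpa using this
  subst hMM
  have hlist : (List.range (M+1)).map (Lam M δ) = (List.range (M+1)).map (Lam M δ') :=
    List.Perm.eq_of_pairwise' (listSorted M δ) (listSorted M δ') hparts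
  have hLam : ∀ i, i < M + 1 → Lam M δ i = Lam M δ' i := by
    intro i hi
    have := List.map_inj_left.mp hlist i (by simp [List.mem_range]; omega)
    exact this
  have hLamAll : ∀ i, Lam M δ i = Lam M δ' i := by
    intro i
    rcases Nat.lt_or_ge i (M+1) with h' | h'
    · exact hLam i h'
    · have h1 : Lam M δ i = 0 := by
        unfold Lam
        rw [Finset.Ico_eq_empty (by omega), Finset.sum_empty]
      have h2 : Lam M δ' i = 0 := by
        unfold Lam
        rw [Finset.Ico_eq_empty (by omega), Finset.sum_empty]
      rw [h1, h2]
  have hδ : δ = δ' := by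
    funext j
    have hj : (j : ℕ) < M + 1 := j.isLt
    have e1 : Lam M δ (j:ℕ) = deltaExt M δ (j:ℕ) + Lam M δ ((j:ℕ)+1) := Lam_succ M δ hj
    have e2 : Lam M δ' (j:ℕ) = deltaExt M δ' (j:ℕ) + Lam M δ' ((j:ℕ)+1) := Lam_succ M δ' hj
    have hd : deltaExt M δ (j:ℕ) = deltaExt M δ' (j:ℕ) := by
      rw [hLamAll (j:ℕ), hLamAll ((j:ℕ)+1)] at e1
      omega
    have hd1 : deltaExt M δ (j:ℕ) = δ j := by
      simp only [deltaExt, dif_pos hj, Fin.eta]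
    have hd2 : deltaExt M δ' (j:ℕ) = δ' j := by
      simp only [deltaExt, dif_pos hj, Fin.eta]
    rw [hd1, hd2] at hd
    exact hd
  apply Subtype.ext
  show (⟨M, ⟨δ, hAdm⟩⟩ : (M : ℕ) × {δ : Fin (M+1) → ℕ // Adm M δ}) = ⟨M, ⟨δ', hAdm'⟩⟩
  subst hδ
  rfl

lemma Psi_surj (m : ℕ) (hm : 1 ≤ m) : Function.Surjective (Psi m) := by
  rintro ⟨p, hPA⟩
  classical
  set L := Multiset.sort p.parts (· ≥ ·) with hL
  have hsorted : L.Pairwise (· ≥ ·) := Multiset.pairwise_sort _ _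
  have hcoe : (L : Multiset ℕ) = p.parts := Multiset.sort_eq _ _
  have hposL : ∀ x ∈ L, 0 < x := fun x hx => p.parts_pos (by rw [← hcoe]; exact hx)
  have hsum : L.sum = m := by
    have h1 := p.parts_sum
    rw [← hcoe, Multiset.sum_coe] at h1
    exact h1
  have hlen : 1 ≤ L.length := by
    by_contra h
    push_neg at h
    have : L = [] := List.length_eq_zero_iff.mp (by omega)
    rw [this] at hsum
    simp at hsum
    omega
  set M := L.length - 1 with hM
  have hlen' : L.length = M + 1 := by omega
  set Λp : ℕ → ℕ := fun i => L.getD i 0 with hΛp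
  have hget : ∀ i (h : i < L.length), Λp i = L.get ⟨i, h⟩ := by
    intro i h; simp only [hΛp]; exact List.getD_eq_get L 0 ⟨i, h⟩
  have pget : ∀ (i j : Fin L.length), i < j → L.get i ≥ L.get j :=
    List.pairwise_iff_get.mp hsorted
  have hanti : ∀ i j, i ≤ j → Λp j ≤ Λp i := by
    intro i j hij
    rcases Nat.lt_or_ge j L.length with h | h
    · rcases Nat.eq_or_lt_of_le hij with rfl | hlt
      · exact le_refl _
      · rw [hget i (by omega), hget j h]
        exact pget ⟨i, by omega⟩ ⟨j, h⟩ hlt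
    · simp only [hΛp]
      rw [List.getD_eq_default L 0 h]
      exact Nat.zero_le _
  have hmemL : ∀ i, i < L.length → Λp i ∈ p.parts := by
    intro i h
    rw [← hcoe, Multiset.mem_coe, hget i h]
    exact List.get_mem L _
  set δ : Fin (M+1) → ℕ := fun j => Λp (j:ℕ) - Λp ((j:ℕ)+1) with hδ
  have hΛptop : Λp (M+1) = 0 := by
    simp only [hΛp]; exact List.getD_eq_default L 0 (by omega)
  have hLamk : ∀ k, k ≤ M+1 → Lam M δ (M+1-k) = Λp (M+1-k) := by
    intro k
    induction k with
    | zero =>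
      intro _
      simp only [Nat.sub_zero]
      rw [Lam_top, hΛptop]
    | succ k ih =>
      intro hk
      have hi : M+1-(k+1) < M+1 := by omega
      have hstep : M+1-(k+1)+1 = M+1-k := by omega
      rw [Lam_succ M δ hi]
      have hd : deltaExt M δ (M+1-(k+1)) = Λp (M+1-(k+1)) - Λp (M+1-(k+1)+1) := by
        simp only [deltaExt, dif_pos hi, hδ]
      rw [hd, hstep, ih (by omega)]
      have := hanti (M+1-(k+1)) (M+1-k) (by omega)
      omega
  have hLam : ∀ i, i ≤ M+1 → Lam M δ i = Λp i := by
    intro i hi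
    have := hLamk (M+1-i) (by omega)
    rwa [show M+1-(M+1-i) = i by omega] at this
  have hAdm : Adm M δ := by
    constructor
    · intro j hj
      by_cases h0 : δ j = 0
      · exact Or.inl h0
      · right
        have hjlt : (j:ℕ)+1 < L.length := by omega
        set a := Λp ((j:ℕ)+1) with ha
        set b := Λp (j:ℕ) with hb
        have hab : a < b := by
          have := hanti (j:ℕ) ((j:ℕ)+1) (by omega)
          simp only [hδ] at h0
          omega
        have hmema : a ∈ p.parts := hmemL _ hjlt
        have hmemb : b ∈ p.parts := hmemL _ (by omega)
        have hmid : ∀ c ∈ p.parts, ¬(a < c ∧ c < b) := by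
          intro c hc ⟨hc1, hc2⟩
          rw [← hcoe, Multiset.mem_coe, List.mem_iff_get] at hc
          obtain ⟨⟨k, hk⟩, hck⟩ := hc
          rcases Nat.lt_or_ge k ((j:ℕ)+1) with h | h
          · have : b ≤ Λp k := hanti k (j:ℕ) (by omega)
            rw [hget k hk] at this
            omega
          · have : Λp k ≤ a := hanti ((j:ℕ)+1) k h
            rw [hget k hk] at this
            omega
        have hiff := hPA a hmema b hmemb hab hmid
        have hδval : δ j = b - a := rfl
        rw [Nat.odd_iff, Nat.even_iff] at hiff
        rw [Nat.odd_iff, hδval]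
        omega
    · show 1 ≤ δ (Fin.last M)
      have h1 : (Fin.last M : ℕ) = M := rfl
      simp only [hδ, h1, hΛptop]
      have := hposL (L.get ⟨M, by omega⟩) (List.get_mem L _)
      rw [← hget M (by omega)] at this
      omega
  have hlist : (List.range (M+1)).map (Lam M δ) = L := by
    apply List.ext_getElem
    · simp [hlen']
    · intro i h1 h2
      simp only [List.getElem_map, List.getElem_range]
      rw [List.length_map, List.length_range] at h1
      rw [hLam i (by omega), hget i h2]
      rfl
  have hpsm : PsiM M δ = p.parts := by
    rw [PsiM_coe, hlist, hcoe]
  have hw : wT ⟨M, ⟨δ, hAdm⟩⟩ = m := by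
    show wgt M δ = m
    rw [← PsiM_sum M δ, hpsm, ← hcoe, Multiset.sum_coe, hsum]
  refine ⟨⟨⟨M, ⟨δ, hAdm⟩⟩, hw⟩, ?_⟩
  apply Subtype.ext
  apply Nat.Partition.ext
  exact hpsm

lemma card_fiber (m : ℕ) : Nat.card {t : TT // wT t = m + 1} = pa (m + 1) := by
  unfold pa
  exact Nat.card_eq_of_bijective (Psi (m+1)) ⟨Psi_inj (m+1), Psi_surj (m+1) (by omega)⟩

lemma fiber_zero_empty : IsEmpty {t : TT // wT t = 0} := by
  constructor
  rintro ⟨t, ht⟩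
  have := wT_pos t
  omega

lemma one_sub_ne {z : ℂ} (hz : ‖z‖ < 1) : 1 - z ≠ 0 := by
  intro h
  have hz1 : z = 1 := by linear_combination -h
  rw [hz1] at hz
  simp at hz

lemma one_add_ne {z : ℂ} (hz : ‖z‖ < 1) : 1 + z ≠ 0 := by
  intro h
  have hz1 : z = -1 := by linear_combination h
  rw [hz1] at hz
  simp at hz

lemma hab_fact (y : ℂ) :
    (1 - (((Real.sqrt 5 - 1) / 2 : ℝ) : ℂ) * y) * (1 - (-(((Real.sqrt 5 + 1) / 2 : ℝ) : ℂ)) * y)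
      = 1 + y - y^2 := by
  have hs : ((Real.sqrt 5 : ℝ) : ℂ)^2 = 5 := by
    rw [← Complex.ofReal_pow]
    norm_cast
    exact Real.sq_sqrt (by norm_num)
  push_cast
  linear_combination (-(y^2)/4) * hs

lemma SM_eq (q : ℂ) (hq : ‖q‖ < 1) (M : ℕ) :
    SM q M = 2 * (qPoch (((Real.sqrt 5 - 1) / 2 : ℝ) : ℂ) q (M+1) *
      qPoch (-(((Real.sqrt 5 + 1) / 2 : ℝ) : ℂ)) q (M+1) /
      (qPoch q q (M+1) * qPoch (-1) q (M+1)) * q^(M+1)) := by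
  have hlt : ∀ k : ℕ, 1 ≤ k → ‖q ^ k‖ < 1 := fun k hk => pow_c_norm_lt_one hq hk
  have hBne : ∀ j ∈ Finset.range M, (1 - q^(j+1)) ≠ 0 :=
    fun j _ => one_sub_ne (hlt (j+1) (by omega))
  have hCne : ∀ j ∈ Finset.range M, (1 + q^(j+1)) ≠ 0 :=
    fun j _ => one_add_ne (hlt (j+1) (by omega))
  have hB : (∏ j ∈ Finset.range M, (1 - q^(j+1))) ≠ 0 := Finset.prod_ne_zero_iff.mpr hBne
  have hC : (∏ j ∈ Finset.range M, (1 + q^(j+1))) ≠ 0 := Finset.prod_ne_zero_iff.mpr hCne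
  have hD : (1 - q^(M+1)) ≠ 0 := one_sub_ne (hlt (M+1) (by omega))
  -- numerator
  have hnum : qPoch (((Real.sqrt 5 - 1) / 2 : ℝ) : ℂ) q (M+1) *
      qPoch (-(((Real.sqrt 5 + 1) / 2 : ℝ) : ℂ)) q (M+1)
      = ∏ k ∈ Finset.range M, (1 + q^(k+1) - (q^(k+1))^2) := by
    unfold qPoch
    rw [← Finset.prod_mul_distrib]
    rw [Finset.prod_congr rfl (fun k _ => hab_fact (q^k))]
    rw [Finset.prod_range_succ']
    simp
  have hden1 : qPoch q q (M+1) = (∏ k ∈ Finset.range M, (1 - q^(k+1))) * (1 - q^(M+1)) := by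
    unfold qPoch
    rw [Finset.prod_congr rfl (fun k _ => by rw [← pow_succ'] : ∀ k ∈ Finset.range (M+1), (1 - q * q ^ k) = 1 - q^(k+1))]
    exact Finset.prod_range_succ _ M
  have hden2 : qPoch (-1) q (M+1) = (∏ k ∈ Finset.range M, (1 + q^(k+1))) * 2 := by
    unfold qPoch
    rw [Finset.prod_congr rfl (fun k _ => by ring : ∀ k ∈ Finset.range (M+1), (1 - (-1) * q ^ k) = 1 + q^k)]
    rw [Finset.prod_range_succ']
    norm_num
  -- SM side
  have hfac : ∀ j ∈ Finset.range M, (1 + q^(j+1) * (1 - q^(2*(j+1)))⁻¹)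
      = (1 + q^(j+1) - (q^(j+1))^2) * ((1 - q^(j+1)) * (1 + q^(j+1)))⁻¹ := by
    intro j hj
    have hne1 := hBne j hj
    have hne2 := hCne j hj
    have h2 : q^(2*(j+1)) = (q^(j+1))^2 := by rw [mul_comm 2, pow_mul]
    have h3 : (1:ℂ) - (q^(j+1))^2 = (1 - q^(j+1)) * (1 + q^(j+1)) := by ring
    have hz : (1:ℂ) - (q^(j+1))^2 ≠ 0 := by rw [h3]; exact mul_ne_zero hne1 hne2
    rw [h2, ← h3]
    field_simp [hz]
    ring
  have hSM : SM q M = (∏ k ∈ Finset.range M, (1 + q^(k+1) - (q^(k+1))^2)) *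
      ((∏ j ∈ Finset.range M, (1 - q^(j+1))) * (∏ j ∈ Finset.range M, (1 + q^(j+1))))⁻¹ *
      (q^(M+1) * (1 - q^(M+1))⁻¹) := by
    unfold SM
    rw [Finset.prod_congr rfl hfac, Finset.prod_mul_distrib]
    rw [Finset.prod_inv_distrib, Finset.prod_mul_distrib]
  rw [hSM, hnum, hden1, hden2]
  field_simp

section RealBound
variable {r : ℝ}

lemma rpow_le (hr0 : 0 ≤ r) (hr : r < 1) (n : ℕ) (hn : 1 ≤ n) : r^n ≤ r := pow_le_of_le_one hr0 hr.le (by omega)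

lemma rden_pos (hr0 : 0 ≤ r) (hr : r < 1) (n : ℕ) (hn : 1 ≤ n) : 0 < 1 - r^n := by
  have := rpow_le hr0 hr n hn; linarith

lemma rinv_le (hr0 : 0 ≤ r) (hr : r < 1) (n : ℕ) (hn : 1 ≤ n) : (1 - r^n)⁻¹ ≤ (1 - r)⁻¹ := by
  have h1 : 0 < 1 - r := by linarith
  have h2 : 1 - r ≤ 1 - r^n := by have := rpow_le hr0 hr n hn; linarith
  exact inv_anti₀ h1 h2

lemma SM_nonneg (hr0 : 0 ≤ r) (hr : r < 1) (M : ℕ) : 0 ≤ SM r M := by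
  unfold SM
  apply mul_nonneg
  · apply Finset.prod_nonneg
    intro j _
    have h1 : 0 < 1 - r^(2*(j+1)) := rden_pos hr0 hr _ (by omega)
    have := inv_nonneg.mpr h1.le
    positivity
  · have h1 : 0 < 1 - r^(M+1) := rden_pos hr0 hr _ (by omega)
    have := inv_nonneg.mpr h1.le
    positivity

lemma SM_le (hr0 : 0 ≤ r) (hr : r < 1) (M : ℕ) :
    SM r M ≤ (Real.exp ((1-r)⁻¹ * r * (1-r)⁻¹) * (1-r)⁻¹) * r^(M+1) := by
  set c := (1-r)⁻¹ with hc
  have hcpos : 0 ≤ c := inv_nonneg.mpr (by linarith)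
  have hfac : ∀ j ∈ Finset.range M, 1 + r^(j+1) * (1 - r^(2*(j+1)))⁻¹
      ≤ Real.exp (c * r^(j+1)) := by
    intro j _
    have h1 : r^(j+1) * (1 - r^(2*(j+1)))⁻¹ ≤ r^(j+1) * c := by
      apply mul_le_mul_of_nonneg_left (rinv_le hr0 hr _ (by omega)) (pow_nonneg hr0 _)
    calc 1 + r^(j+1) * (1 - r^(2*(j+1)))⁻¹ ≤ 1 + r^(j+1) * c := by linarith
    _ = c * r^(j+1) + 1 := by ring
    _ ≤ Real.exp (c * r^(j+1)) := Real.add_one_le_exp _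
  have hprod : (∏ j ∈ Finset.range M, (1 + r^(j+1) * (1 - r^(2*(j+1)))⁻¹))
      ≤ Real.exp (c * r * c) := by
    calc (∏ j ∈ Finset.range M, (1 + r^(j+1) * (1 - r^(2*(j+1)))⁻¹))
        ≤ ∏ j ∈ Finset.range M, Real.exp (c * r^(j+1)) := by
          apply Finset.prod_le_prod
          · intro j _
            have h1 : 0 < 1 - r^(2*(j+1)) := rden_pos hr0 hr _ (by omega)
            have := inv_nonneg.mpr h1.le
            positivity
          · exact hfac
    _ = Real.exp (∑ j ∈ Finset.range M, c * r^(j+1)) := (Real.exp_sum _ _).symm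
    _ ≤ Real.exp (c * r * c) := by
        apply Real.exp_le_exp.mpr
        have hsum : ∑ j ∈ Finset.range M, c * r^(j+1) = (c * r) * ∑ j ∈ Finset.range M, r^j := by
          rw [Finset.mul_sum]
          apply Finset.sum_congr rfl
          intro j _
          rw [pow_succ]
          ring
        rw [hsum]
        have hpart : ∑ j ∈ Finset.range M, r^j ≤ c := by
          have h1 := (summable_geometric_of_lt_one hr0 hr).sum_le_tsum (Finset.range M) (fun i _ => pow_nonneg hr0 i)
          rw [tsum_geometric_of_lt_one hr0 hr] at h1
          exact h1
        have : 0 ≤ c * r := mul_nonneg hcpos hr0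
        nlinarith
  unfold SM
  have hlast : r^(M+1) * (1 - r^(M+1))⁻¹ ≤ r^(M+1) * c :=
    mul_le_mul_of_nonneg_left (rinv_le hr0 hr _ (by omega)) (pow_nonneg hr0 _)
  have hlast0 : 0 ≤ r^(M+1) * (1 - r^(M+1))⁻¹ :=
    mul_nonneg (pow_nonneg hr0 _) (inv_nonneg.mpr (rden_pos hr0 hr _ (by omega)).le)
  calc (∏ j ∈ Finset.range M, (1 + r^(j+1) * (1 - r^(2*(j+1)))⁻¹)) * (r^(M+1) * (1 - r^(M+1))⁻¹)
      ≤ Real.exp (c * r * c) * (r^(M+1) * c) := by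
        apply mul_le_mul hprod hlast hlast0 (Real.exp_nonneg _)
  _ = (Real.exp (c * r * c) * c) * r^(M+1) := by ring
  _ = (Real.exp ((1-r)⁻¹ * r * (1-r)⁻¹) * (1-r)⁻¹) * r^(M+1) := by rw [← hc]

lemma SM_summable_real (hr0 : 0 ≤ r) (hr : r < 1) : Summable (fun M => SM r M) := by
  have h1 : Summable (fun M : ℕ => r ^ M) := summable_geometric_of_lt_one hr0 hr
  have h2 := (h1.mul_left ((Real.exp ((1-r)⁻¹ * r * (1-r)⁻¹) * (1-r)⁻¹) * r))
  have h3 : Summable (fun M : ℕ => (Real.exp ((1-r)⁻¹ * r * (1-r)⁻¹) * (1-r)⁻¹) * r^(M+1)) := by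
    apply h2.congr
    intro M
    rw [pow_succ]
    ring
  exact Summable.of_nonneg_of_le (SM_nonneg hr0 hr) (SM_le hr0 hr) h3

end RealBound

end AuxPA

theorem pa_generating_function_basic_hypergeometric (q : ℂ) (hq : ‖q‖ < 1) :
    ∑' n : ℕ, (pa (n + 1) : ℂ) * q ^ (n + 1) =
      2 * ∑' n : ℕ,
        qPoch (((Real.sqrt 5 - 1) / 2 : ℝ) : ℂ) q (n + 1) *
          qPoch (-(((Real.sqrt 5 + 1) / 2 : ℝ) : ℂ)) q (n + 1) /
          (qPoch q q (n + 1) * qPoch (-1) q (n + 1)) * q ^ (n + 1) := by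
  classical
  have hr0 : (0:ℝ) ≤ ‖q‖ := norm_nonneg q
  have hrnorm : ‖(‖q‖ : ℝ)‖ < 1 := by rwa [Real.norm_of_nonneg hr0]
  -- fiberwise summability in ℝ
  have hfibR : ∀ M : ℕ, Summable (fun δ : {δ : Fin (M+1) → ℕ // Adm M δ} => ‖q‖ ^ wgt M δ.1) := by
    intro M
    have h := vm_summable (K := ℝ) ‖q‖ hrnorm M
    apply h.congr
    intro δ
    rw [Real.norm_of_nonneg (pow_nonneg hr0 _)]
  have hfibT : ∀ M : ℕ, (∑' δ : {δ : Fin (M+1) → ℕ // Adm M δ}, ‖q‖ ^ wgt M δ.1) = SM ‖q‖ M :=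
    fun M => vm_tsum (K := ℝ) ‖q‖ hrnorm M
  -- summability over TT of norms
  have hTTnorm : Summable (fun t : TT => ‖q‖ ^ wT t) := by
    apply (summable_sigma_of_nonneg
      (f := fun t : TT => ‖q‖ ^ wT t) (fun t => pow_nonneg hr0 _)).mpr
    constructor
    · intro M
      exact hfibR M
    · have h1 : Summable (fun M => SM ‖q‖ M) := SM_summable_real hr0 hq
      apply h1.congr
      intro M
      rw [← hfibT M]
      rfl
  have hTT : Summable (fun t : TT => q ^ wT t) := by
    apply Summable.of_norm
    apply hTTnorm.congr
    intro t
    rw [norm_pow]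
  -- E1 : group by M
  have E1 : ∑' t : TT, q ^ wT t = ∑' M : ℕ, SM q M := by
    rw [hTT.tsum_sigma]
    exact tsum_congr (fun M => vm_tsum (K := ℂ) q hq M)
  -- E2 : group by weight
  have hs : Summable (fun p : (m : ℕ) × {t : TT // wT t = m} => q ^ wT p.2.1) :=
    ((Equiv.sigmaFiberEquiv wT).summable_iff (f := fun t : TT => q ^ wT t)).mpr hTT
  have fibval : ∀ m : ℕ, (∑' t : {t : TT // wT t = m}, q ^ wT t.1)
      = (Nat.card {t : TT // wT t = m} : ℂ) * q ^ m := by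
    intro m
    calc ∑' t : {t : TT // wT t = m}, q ^ wT t.1
        = ∑' _t : {t : TT // wT t = m}, q ^ m := tsum_congr (fun t => by rw [t.2])
    _ = (Nat.card {t : TT // wT t = m}) • q ^ m := tsum_const _
    _ = (Nat.card {t : TT // wT t = m} : ℂ) * q ^ m := nsmul_eq_mul _ _
  have E2 : ∑' t : TT, q ^ wT t
      = ∑' m : ℕ, (Nat.card {t : TT // wT t = m} : ℂ) * q ^ m := by
    rw [← (Equiv.sigmaFiberEquiv wT).tsum_eq (fun t : TT => q ^ wT t)]
    have e1 : ∑' (c : (y : ℕ) × {x : TT // wT x = y}), q ^ wT ((Equiv.sigmaFiberEquiv wT) c)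
        = ∑' (c : (y : ℕ) × {x : TT // wT x = y}), q ^ wT c.2.1 :=
      tsum_congr (fun c => rfl)
    rw [e1, hs.tsum_sigma]
    exact tsum_congr fibval
  have hF : Summable (fun m : ℕ => (Nat.card {t : TT // wT t = m} : ℂ) * q ^ m) := by
    have h1 := hs.sigma
    apply h1.congr
    intro m
    exact fibval m
  -- left side
  have hL : ∑' n : ℕ, (pa (n + 1) : ℂ) * q ^ (n + 1)
      = ∑' m : ℕ, (Nat.card {t : TT // wT t = m} : ℂ) * q ^ m := by
    rw [hF.tsum_eq_zero_add]
    have h0 : (Nat.card {t : TT // wT t = 0} : ℂ) * q ^ 0 = 0 := by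
      rw [@Nat.card_of_isEmpty _ fiber_zero_empty]
      simp
    rw [h0, zero_add]
    exact tsum_congr (fun n => by rw [card_fiber n])
  rw [hL, ← E2, E1]
  rw [tsum_congr (fun M => SM_eq q hq M)]
  exact tsum_mul_left
end

section
/- The integral ∫_0^1 log(1 + x − x²)/x dx equals 2·(log((1+√5)/2))². -/
open Real MeasureTheory intervalIntegral Set

-- Step 1: inner t-integral
lemma inner_t {x : ℝ} (hx : x ∈ Set.Ioo (0:ℝ) 1) :
    ∫ t in (0:ℝ)..1, (1 + t * (x * (1 - x)))⁻¹
      = Real.log (1 + x - x ^ 2) / x + Real.log (1 + x - x ^ 2) / (1 - x) := by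
  obtain ⟨hx0, hx1⟩ := hx
  have hc : 0 < x * (1 - x) := by nlinarith
  have hF : ∀ t ∈ Set.uIcc (0:ℝ) 1,
      HasDerivAt (fun s => (x * (1 - x))⁻¹ * Real.log (1 + s * (x * (1 - x))))
        ((1 + t * (x * (1 - x)))⁻¹) t := by
    intro t ht
    rw [Set.uIcc_of_le zero_le_one] at ht
    have hpos : 0 < 1 + t * (x * (1 - x)) := by nlinarith [ht.1, ht.2]
    have h1 : HasDerivAt (fun s : ℝ => 1 + s * (x * (1 - x))) (x * (1 - x)) t := by
      simpa using ((hasDerivAt_id t).mul_const (x * (1 - x))).const_add 1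
    have h2 := (Real.hasDerivAt_log hpos.ne').comp t h1
    have h3 := h2.const_mul (x * (1 - x))⁻¹
    refine h3.congr_deriv ?_
    field_simp
  have hint : IntervalIntegrable (fun t => (1 + t * (x * (1 - x)))⁻¹) volume 0 1 := by
    apply ContinuousOn.intervalIntegrable
    apply ContinuousOn.inv₀
    · fun_prop
    · intro t ht
      rw [Set.uIcc_of_le zero_le_one] at ht
      nlinarith [ht.1, ht.2]
  rw [intervalIntegral.integral_eq_sub_of_hasDerivAt hF hint]
  have h1x : (1:ℝ) + 1 * (x * (1 - x)) = 1 + x - x ^ 2 := by ring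
  rw [h1x]
  simp only [zero_mul, add_zero, Real.log_one, mul_zero, sub_zero]
  have h1x' : (1:ℝ) - x ≠ 0 := by linarith
  field_simp
  ring

lemma meas1 : Measurable (fun x : ℝ => Real.log (1 + x - x ^ 2) / x) := by
  apply Measurable.div
  · exact Real.measurable_log.comp (by fun_prop)
  · exact measurable_id

lemma int1 : IntervalIntegrable (fun x : ℝ => Real.log (1 + x - x ^ 2) / x) volume 0 1 := by
  rw [intervalIntegrable_iff_integrableOn_Ioc_of_le zero_le_one]
  apply Integrable.mono' (integrable_const (1:ℝ)) meas1.aestronglyMeasurable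
  rw [ae_restrict_iff' measurableSet_Ioc]
  filter_upwards with x hx
  obtain ⟨hx0, hx1⟩ := hx
  have h1 : (1:ℝ) ≤ 1 + x - x ^ 2 := by nlinarith
  have h2 : Real.log (1 + x - x ^ 2) ≤ x - x ^ 2 :=
    le_trans (Real.log_le_sub_one_of_pos (by linarith)) (by linarith)
  have h3 : 0 ≤ Real.log (1 + x - x ^ 2) := Real.log_nonneg h1
  rw [Real.norm_eq_abs, abs_le]
  constructor
  · have := div_nonneg h3 hx0.le; linarith
  · rw [div_le_one hx0]; nlinarith

lemma symm1 : ∫ x in (0:ℝ)..1, Real.log (1 + x - x ^ 2) / (1 - x)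
    = ∫ x in (0:ℝ)..1, Real.log (1 + x - x ^ 2) / x := by
  have h := intervalIntegral.integral_comp_sub_left (fun y => Real.log (1 + y - y ^ 2) / y) 1
      (a := 0) (b := 1)
  simp only [sub_zero, sub_self] at h
  rw [← h]
  apply intervalIntegral.integral_congr
  intro x _
  simp only
  rw [show 1 + (1 - x) - (1 - x) ^ 2 = 1 + x - x ^ 2 by ring]

lemma int2 : IntervalIntegrable (fun x : ℝ => Real.log (1 + x - x ^ 2) / (1 - x)) volume 0 1 := by
  have h : IntervalIntegrable (fun x : ℝ => Real.log (1 + (1-x) - (1-x) ^ 2) / (1-x)) volume 0 1 := by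
    have := (int1.comp_sub_left 1)
    simpa using this.symm
  apply h.congr
  intro x _
  simp only
  rw [show 1 + (1 - x) - (1 - x) ^ 2 = 1 + x - x ^ 2 by ring]

lemma fub : Integrable (Function.uncurry fun (x t : ℝ) => (1 + t * (x * (1 - x)))⁻¹)
    ((volume.restrict (Ioc (0:ℝ) 1)).prod (volume.restrict (Ioc (0:ℝ) 1))) := by
  rw [Measure.prod_restrict]
  have hfin : (volume.prod volume) (Ioc (0:ℝ) 1 ×ˢ Ioc (0:ℝ) 1) < ⊤ := by
    rw [Measure.prod_prod, Real.volume_Ioc]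
    simp
  haveI : IsFiniteMeasure (((volume : Measure ℝ).prod volume).restrict
      (Ioc (0:ℝ) 1 ×ˢ Ioc (0:ℝ) 1)) := by
    constructor
    rw [Measure.restrict_apply_univ]
    exact hfin
  have hmeas : Measurable (Function.uncurry fun (x t : ℝ) => (1 + t * (x * (1 - x)))⁻¹) := by
    apply Measurable.inv
    fun_prop
  apply Integrable.mono' (integrable_const (1:ℝ)) hmeas.aestronglyMeasurable
  rw [ae_restrict_iff' (measurableSet_Ioc.prod measurableSet_Ioc)]
  filter_upwards with p hp
  obtain ⟨⟨hx0, hx1⟩, ⟨ht0, ht1⟩⟩ := hp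
  have hden : (1:ℝ) ≤ 1 + p.2 * (p.1 * (1 - p.1)) := by
    nlinarith [mul_nonneg ht0.le (mul_nonneg hx0.le (by linarith : (0:ℝ) ≤ 1 - p.1))]
  simp only [Function.uncurry, Real.norm_eq_abs]
  rw [abs_of_nonneg (by positivity)]
  rw [inv_le_one_iff₀]
  right; exact hden

lemma inner_x {t : ℝ} (ht : t ∈ Set.Ioo (0:ℝ) 1) :
    ∫ x in (0:ℝ)..1, (1 + t * (x * (1 - x)))⁻¹
      = 2 * (Real.sqrt (t * (4 + t)))⁻¹ *
        (Real.log (Real.sqrt (t * (4 + t)) + t) - Real.log (Real.sqrt (t * (4 + t)) - t)) := by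
  obtain ⟨ht0, ht1⟩ := ht
  set A := Real.sqrt (t * (4 + t)) with hA
  have hA2 : A ^ 2 = t * (4 + t) := Real.sq_sqrt (by nlinarith)
  have hApos : 0 < A := Real.sqrt_pos.mpr (by nlinarith)
  have hAt : t < A := by nlinarith
  have hψ : ∀ x ∈ Set.uIcc (0:ℝ) 1,
      HasDerivAt (fun y => A⁻¹ * (Real.log (A + t * (2 * y - 1)) - Real.log (A - t * (2 * y - 1))))
        ((1 + t * (x * (1 - x)))⁻¹) x := by
    intro x hx
    rw [Set.uIcc_of_le zero_le_one] at hx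
    obtain ⟨hx0, hx1⟩ := hx
    have hu1 : 0 < A + t * (2 * x - 1) := by nlinarith
    have hu2 : 0 < A - t * (2 * x - 1) := by nlinarith
    have hd1 : HasDerivAt (fun y : ℝ => A + t * (2 * y - 1)) (2 * t) x := by
      have : HasDerivAt (fun y : ℝ => 2 * y - 1) 2 x := by
        simpa using ((hasDerivAt_id x).const_mul 2).sub_const 1
      simpa [mul_comm] using (this.const_mul t).const_add A
    have hd2 : HasDerivAt (fun y : ℝ => A - t * (2 * y - 1)) (-(2 * t)) x := by
      have : HasDerivAt (fun y : ℝ => 2 * y - 1) 2 x := by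
        simpa using ((hasDerivAt_id x).const_mul 2).sub_const 1
      have h' := (this.const_mul t).const_add A
      have h'' : HasDerivAt (fun y : ℝ => A - t * (2 * y - 1)) (-(t * 2)) x := by
        exact (this.const_mul t).const_sub A
      simpa [mul_comm] using h''
    have hl1 := (Real.hasDerivAt_log hu1.ne').comp x hd1
    have hl2 := (Real.hasDerivAt_log hu2.ne').comp x hd2
    have h := ((hl1.sub hl2).const_mul A⁻¹)
    refine h.congr_deriv ?_
    have hden : 0 < 1 + t * (x * (1 - x)) := by nlinarith
    field_simp
    nlinarith [hA2, sq_nonneg (A + t*(2*x-1)), sq_nonneg (A - t*(2*x-1))]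
  have hint : IntervalIntegrable (fun x => (1 + t * (x * (1 - x)))⁻¹) volume 0 1 := by
    apply ContinuousOn.intervalIntegrable
    apply ContinuousOn.inv₀
    · fun_prop
    · intro x hx
      rw [Set.uIcc_of_le zero_le_one] at hx
      nlinarith [mul_nonneg ht0.le (mul_nonneg hx.1 (by linarith [hx.2] : (0:ℝ) ≤ 1 - x))]
  rw [intervalIntegral.integral_eq_sub_of_hasDerivAt hψ hint]
  ring_nf

lemma phi_deriv {t : ℝ} (ht : t ∈ Set.Ioo (0:ℝ) 1) :
    HasDerivAt (fun s => 4 * Real.arsinh (Real.sqrt s / 2) ^ 2)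
      (2 * (Real.sqrt (t * (4 + t)))⁻¹ *
        (Real.log (Real.sqrt (t * (4 + t)) + t) - Real.log (Real.sqrt (t * (4 + t)) - t))) t := by
  obtain ⟨ht0, ht1⟩ := ht
  set A := Real.sqrt (t * (4 + t)) with hA
  have hst : Real.sqrt t ^ 2 = t := Real.sq_sqrt ht0.le
  have hs4 : Real.sqrt (4 + t) ^ 2 = 4 + t := Real.sq_sqrt (by linarith)
  have hstpos : 0 < Real.sqrt t := Real.sqrt_pos.mpr ht0
  have hs4pos : 0 < Real.sqrt (4 + t) := Real.sqrt_pos.mpr (by linarith)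
  have hAmul : A = Real.sqrt t * Real.sqrt (4 + t) := Real.sqrt_mul ht0.le _
  have hA2 : A ^ 2 = t * (4 + t) := Real.sq_sqrt (by nlinarith)
  have hApos : 0 < A := by rw [hAmul]; positivity
  have hAt : t < A := by nlinarith
  -- the √(1 + (√t/2)^2) simplification
  have h45 : Real.sqrt (1 + (Real.sqrt t / 2) ^ 2) = Real.sqrt (4 + t) / 2 := by
    rw [show 1 + (Real.sqrt t / 2) ^ 2 = (Real.sqrt (4 + t) / 2) ^ 2 by
      rw [div_pow, div_pow, hst, hs4]; ring]
    exact Real.sqrt_sq (by positivity)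
  -- the log identity
  have hlog : Real.log (A + t) - Real.log (A - t)
      = 2 * Real.arsinh (Real.sqrt t / 2) := by
    have harsinh : Real.arsinh (Real.sqrt t / 2)
        = Real.log ((Real.sqrt t + Real.sqrt (4 + t)) / 2) := by
      rw [Real.arsinh, h45]
      ring_nf
    have hquot : A + t = ((Real.sqrt t + Real.sqrt (4 + t)) / 2) ^ 2 * (A - t) := by
      nlinarith [hA2, hAmul, hst, hs4]
    rw [hquot, Real.log_mul (by positivity) (by nlinarith), Real.log_pow, harsinh]
    push_cast
    ring
  -- build the derivative
  have hd1 : HasDerivAt Real.sqrt (1 / (2 * Real.sqrt t)) t := Real.hasDerivAt_sqrt ht0.ne'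
  have hd2 : HasDerivAt (fun s => Real.sqrt s / 2) (1 / (2 * Real.sqrt t) / 2) t := hd1.div_const 2
  have hd3 := (Real.hasDerivAt_arsinh (Real.sqrt t / 2)).comp t hd2
  have hd4 := hd3.pow 2
  have hd5 := hd4.const_mul (4:ℝ)
  refine hd5.congr_deriv ?_
  simp only [Function.comp_apply]
  rw [h45, hlog]
  have : Real.arsinh (Real.sqrt t / 2) = Real.arsinh (Real.sqrt t / 2) := rfl
  field_simp
  rw [hAmul]
  ring

theorem integral_log_one_add_x_sub_sq :
    ∫ x in (0:ℝ)..1, Real.log (1 + x - x ^ 2) / x =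
      2 * Real.log ((1 + Real.sqrt 5) / 2) ^ 2 := by
  set I := ∫ x in (0:ℝ)..1, Real.log (1 + x - x ^ 2) / x with hI
  set Φ : ℝ → ℝ := fun s => 4 * Real.arsinh (Real.sqrt s / 2) ^ 2 with hΦ
  have hsum : I + I = ∫ x in (0:ℝ)..1,
      (Real.log (1 + x - x ^ 2) / x + Real.log (1 + x - x ^ 2) / (1 - x)) := by
    rw [intervalIntegral.integral_add int1 int2, hI, symm1]
  have hcong : (∫ x in (0:ℝ)..1,
      (Real.log (1 + x - x ^ 2) / x + Real.log (1 + x - x ^ 2) / (1 - x)))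
      = ∫ x in (0:ℝ)..1, ∫ t in (0:ℝ)..1, (1 + t * (x * (1 - x)))⁻¹ := by
    apply intervalIntegral.integral_congr_ae
    have h1 : ∀ᵐ x ∂(volume : Measure ℝ), x ≠ 1 := by
      have : (volume : Measure ℝ) {1} = 0 := measure_singleton 1
      exact measure_eq_zero_iff_ae_notMem.mp this
    filter_upwards [h1] with x hx hxI
    rw [Set.uIoc_of_le zero_le_one] at hxI
    have hxoo : x ∈ Set.Ioo (0:ℝ) 1 := ⟨hxI.1, lt_of_le_of_ne hxI.2 hx⟩
    exact (inner_t hxoo).symm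
  have hswap : (∫ x in (0:ℝ)..1, ∫ t in (0:ℝ)..1, (1 + t * (x * (1 - x)))⁻¹)
      = ∫ t in (0:ℝ)..1, ∫ x in Set.Ioc (0:ℝ) 1, (1 + t * (x * (1 - x)))⁻¹ := by
    rw [intervalIntegral.integral_of_le zero_le_one,
        intervalIntegral.integral_of_le zero_le_one]
    simp only [intervalIntegral.integral_of_le zero_le_one]
    exact MeasureTheory.integral_integral_swap fub
  have houter : (∫ t in (0:ℝ)..1, ∫ x in Set.Ioc (0:ℝ) 1, (1 + t * (x * (1 - x)))⁻¹)
      = Φ 1 - Φ 0 := by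
    apply intervalIntegral.integral_eq_sub_of_hasDerivAt_of_le zero_le_one
    · apply Continuous.continuousOn
      have h1 : Continuous fun s : ℝ => Real.sqrt s / 2 := Real.continuous_sqrt.div_const 2
      exact continuous_const.mul ((Real.continuous_arsinh.comp h1).pow 2)
    · intro t htIoo
      have h := phi_deriv htIoo
      have heq := inner_x htIoo
      rw [intervalIntegral.integral_of_le zero_le_one] at heq
      rw [heq]
      exact h
    · rw [intervalIntegrable_iff_integrableOn_Ioc_of_le zero_le_one]
      exact fub.integral_prod_right
  have hΦ1 : Φ 1 = 4 * Real.log ((1 + Real.sqrt 5) / 2) ^ 2 := by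
    have h5 : Real.sqrt (1 + ((1:ℝ)/2) ^ 2) = Real.sqrt 5 / 2 := by
      rw [show 1 + ((1:ℝ)/2) ^ 2 = (Real.sqrt 5 / 2) ^ 2 by
        nlinarith [Real.sq_sqrt (show (0:ℝ) ≤ 5 by norm_num)]]
      exact Real.sqrt_sq (by positivity)
    have : Real.arsinh ((1:ℝ)/2) = Real.log ((1 + Real.sqrt 5) / 2) := by
      rw [Real.arsinh, h5]
      ring_nf
    simp only [hΦ, Real.sqrt_one]
    rw [this]
  have hΦ0 : Φ 0 = 0 := by
    simp [hΦ, Real.sqrt_zero, Real.arsinh_zero]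
  have : I + I = 4 * Real.log ((1 + Real.sqrt 5) / 2) ^ 2 := by
    rw [hsum, hcong, hswap, houter, hΦ1, hΦ0]; ring
  linarith
end

section
/- For every partition of a positive integer n in which every part size other than the largest appears an odd number of times, and for |q| < 1, these partitions are generated by ∑_{n≥1} p_o*(n) q^n = ∑_{n≥1} (q^n/(1−q^n)) ∏_{k=1}^{n−1} (1 + q^k/(1−q^{2k})), where in the n-th summand the factor q^n/(1−q^n) accounts for the largest part n appearing any positive number of times and each factor 1 + q^k/(1−q^{2k}) accounts for the part k appearing zero times or an odd number of times. -/
set_option maxHeartbeats 1000000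

namespace PoStarAux

open Finset

/-! ### Analytic lemmas -/

/-- weight of a multiplicity vector -/
def W {n : ℕ} (g : Fin n → ℕ) : ℕ := ∑ i : Fin n, (i.1 + 1) * g i

/-- multiplicities that are zero or odd -/
abbrev M : Type := {m : ℕ // m = 0 ∨ Odd m}

abbrev C (n : ℕ) : Type := {f : Fin n → ℕ // ∀ i, f i = 0 ∨ Odd (f i)}

lemma geom_k {K : Type} [NormedField K] [CompleteSpace K] (x : K) (hx : ‖x‖ < 1)
    (k : ℕ) (hk : 1 ≤ k) :
    Summable (fun j : ℕ => x ^ (k * (j + 1))) ∧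
      ∑' j : ℕ, x ^ (k * (j + 1)) = x ^ k / (1 - x ^ k) := by
  have hxk : ‖x ^ k‖ < 1 := by
    rw [norm_pow]
    calc ‖x‖ ^ k ≤ ‖x‖ ^ 1 := pow_le_pow_of_le_one (norm_nonneg _) hx.le hk
    _ < 1 := by simpa using hx
  have hg := summable_geometric_of_norm_lt_one hxk
  have hfun : (fun j : ℕ => x ^ (k * (j + 1))) = fun j : ℕ => x ^ k * (x ^ k) ^ j := by
    funext j
    rw [pow_mul, pow_succ, mul_comm]
  constructor
  · rw [hfun]; exact hg.mul_left _
  · rw [hfun, tsum_mul_left, tsum_geometric_of_norm_lt_one hxk, div_eq_mul_inv]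

def mval : ℕ → M
  | 0 => ⟨0, Or.inl rfl⟩
  | (j + 1) => ⟨2 * j + 1, Or.inr ⟨j, by ring⟩⟩

def mEquiv : ℕ ≃ M where
  toFun := mval
  invFun m := (m.1 + 1) / 2
  left_inv := by
    rintro (_ | j)
    · rfl
    · show (2 * j + 1 + 1) / 2 = j + 1
      omega
  right_inv := by
    rintro ⟨m, h | ⟨j, hj⟩⟩
    · subst h; rfl
    · subst hj
      show mval ((2 * j + 1 + 1) / 2) = _
      have h2 : (2 * j + 1 + 1) / 2 = j + 1 := by omega
      rw [h2]
      simp only [mval]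

lemma sumM {K : Type} [NormedField K] [CompleteSpace K] (x : K) (hx : ‖x‖ < 1)
    (k : ℕ) (hk : 1 ≤ k) :
    Summable (fun m : M => x ^ (k * m.1)) ∧
      ∑' m : M, x ^ (k * m.1) = 1 + x ^ k / (1 - x ^ (2 * k)) := by
  have key : ∀ j : ℕ, x ^ (k * (mval (j + 1)).1) = x ^ k * ((x ^ (2 * k)) ^ j) := by
    intro j
    rw [← pow_mul, ← pow_add]
    congr 1
    simp [mval]; ring
  have hxk2 : ‖x ^ (2 * k)‖ < 1 := by
    rw [norm_pow]
    calc ‖x‖ ^ (2 * k) ≤ ‖x‖ ^ 1 := pow_le_pow_of_le_one (norm_nonneg _) hx.le (by omega)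
    _ < 1 := by simpa using hx
  have hsucc : Summable (fun j : ℕ => x ^ (k * (mval (j + 1)).1)) := by
    simp_rw [key]
    exact (summable_geometric_of_norm_lt_one hxk2).mul_left _
  have hsum : Summable (fun j : ℕ => x ^ (k * (mval j).1)) :=
    (summable_nat_add_iff 1).mp hsucc
  constructor
  · exact mEquiv.summable_iff.mp (by exact hsum)
  · rw [← mEquiv.tsum_eq]
    show ∑' j : ℕ, x ^ (k * (mval j).1) = _
    rw [Summable.tsum_eq_zero_add hsum]
    have h0 : x ^ (k * (mval 0).1) = 1 := by simp [mval]
    rw [h0]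
    congr 1
    simp_rw [key]
    rw [tsum_mul_left, tsum_geometric_of_norm_lt_one hxk2, div_eq_mul_inv]

def cEquiv (n : ℕ) : C (n + 1) ≃ C n × M where
  toFun f := (⟨fun i => f.1 i.castSucc, fun i => f.2 _⟩, ⟨f.1 (Fin.last n), f.2 _⟩)
  invFun p := ⟨Fin.snoc p.1.1 p.2.1, by
    intro i
    induction i using Fin.lastCases with
    | last => simpa using p.2.2
    | cast j => simpa using p.1.2 j⟩
  left_inv f := by
    apply Subtype.ext
    funext i
    induction i using Fin.lastCases with
    | last => simp
    | cast j => simp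
  right_inv p := by
    refine Prod.ext (Subtype.ext ?_) (Subtype.ext ?_)
    · funext j; simp
    · simp

lemma W_snoc {n : ℕ} (g : Fin n → ℕ) (m : ℕ) :
    W (Fin.snoc g m) = W g + (n + 1) * m := by
  unfold W
  rw [Fin.sum_univ_castSucc]
  simp

instance : Unique (C 0) where
  default := ⟨fun _ => 0, fun _ => Or.inl rfl⟩
  uniq f := Subtype.ext (funext fun i => i.elim0)

lemma prodC (n : ℕ) : ∀ {K : Type} [NormedField K] [CompleteSpace K] (x : K), ‖x‖ < 1 →
    (Summable (fun f : C n => x ^ W f.1) ∧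
      ∑' f : C n, x ^ W f.1 = ∏ k ∈ Icc 1 n, (1 + x ^ k / (1 - x ^ (2 * k)))) := by
  induction n with
  | zero =>
    intro K _ _ x hx
    constructor
    · exact (hasSum_fintype _).summable
    · rw [tsum_eq_single (default : C 0) (fun b hb => absurd (Subsingleton.elim b default) hb)]
      have : W (default : C 0).1 = 0 := by simp [W]
      simp [this]
  | succ n ih =>
    intro K _ _ x hx
    have hxR : ‖(‖x‖ : ℝ)‖ < 1 := by rwa [norm_norm]
    have hfn : Summable (fun f : C n => ‖x ^ W f.1‖) := by
      simp_rw [norm_pow]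
      exact (ih (‖x‖ : ℝ) hxR).1
    have hgn : Summable (fun m : M => ‖x ^ ((n + 1) * m.1)‖) := by
      simp_rw [norm_pow]
      exact (sumM (‖x‖ : ℝ) hxR (n + 1) (by omega)).1
    have hmul : Summable (fun p : C n × M => x ^ W p.1.1 * x ^ ((n + 1) * p.2.1)) :=
      summable_mul_of_summable_norm (f := fun f : C n => x ^ W f.1)
        (g := fun m : M => x ^ ((n + 1) * m.1)) hfn hgn
    have hcomp : ∀ p : C n × M,
        x ^ W ((cEquiv n).symm p).1 = x ^ W p.1.1 * x ^ ((n + 1) * p.2.1) := by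
      intro p
      rw [← pow_add]
      congr 1
      exact W_snoc p.1.1 p.2.1
    constructor
    · apply (cEquiv n).symm.summable_iff.mp
      show Summable (fun p : C n × M => x ^ W ((cEquiv n).symm p).1)
      simp_rw [hcomp]
      exact hmul
    · rw [← (cEquiv n).symm.tsum_eq]
      show ∑' p : C n × M, x ^ W ((cEquiv n).symm p).1 = _
      simp_rw [hcomp]
      rw [← tsum_mul_tsum_of_summable_norm (f := fun f : C n => x ^ W f.1)
        (g := fun m : M => x ^ ((n + 1) * m.1)) hfn hgn,
        (ih x hx).2, (sumM x hx (n + 1) (by omega)).2,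
        Finset.prod_Icc_succ_top (Nat.le_add_left 1 n)]

abbrev D (n : ℕ) : Type := ℕ × C n

def wD {n : ℕ} (d : D n) : ℕ := (n + 1) * (d.1 + 1) + W d.2.1

lemma fiber (n : ℕ) {K : Type} [NormedField K] [CompleteSpace K] (x : K) (hx : ‖x‖ < 1) :
    Summable (fun d : D n => x ^ wD d) ∧
      ∑' d : D n, x ^ wD d =
        x ^ (n + 1) / (1 - x ^ (n + 1)) * ∏ k ∈ Icc 1 n, (1 + x ^ k / (1 - x ^ (2 * k))) := by
  have hxR : ‖(‖x‖ : ℝ)‖ < 1 := by rwa [norm_norm]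
  have hfn : Summable (fun j : ℕ => ‖x ^ ((n + 1) * (j + 1))‖) := by
    simp_rw [norm_pow]
    exact (geom_k (‖x‖ : ℝ) hxR (n + 1) (by omega)).1
  have hgn : Summable (fun f : C n => ‖x ^ W f.1‖) := by
    simp_rw [norm_pow]
    exact (prodC n (‖x‖ : ℝ) hxR).1
  have hcomp : ∀ d : D n, x ^ wD d = x ^ ((n + 1) * (d.1 + 1)) * x ^ W d.2.1 := by
    intro d; rw [← pow_add]; rfl
  constructor
  · simp_rw [hcomp]
    exact summable_mul_of_summable_norm (f := fun j : ℕ => x ^ ((n + 1) * (j + 1)))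
      (g := fun f : C n => x ^ W f.1) hfn hgn
  · simp_rw [hcomp]
    rw [← tsum_mul_tsum_of_summable_norm (f := fun j : ℕ => x ^ ((n + 1) * (j + 1)))
      (g := fun f : C n => x ^ W f.1) hfn hgn,
      (geom_k x hx (n + 1) (by omega)).2, (prodC n x hx).2]

abbrev B : Type := Σ n : ℕ, D n

def wB (b : B) : ℕ := wD b.2

lemma summable_B_real {r : ℝ} (h0 : 0 ≤ r) (h1 : r < 1) :
    Summable (fun b : B => r ^ wB b) := by
  have hrn : ‖r‖ < 1 := by rwa [Real.norm_eq_abs, abs_of_nonneg h0]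
  have h1r : (0:ℝ) < 1 - r := by linarith
  have hpow : ∀ k : ℕ, 1 ≤ k → r ^ k ≤ r := by
    intro k hk
    calc r ^ k ≤ r ^ 1 := pow_le_pow_of_le_one h0 h1.le hk
    _ = r := pow_one r
  have hden : ∀ k : ℕ, 1 ≤ k → (0:ℝ) < 1 - r ^ k ∧ 1 - r ≤ 1 - r ^ k := by
    intro k hk
    constructor <;> nlinarith [hpow k hk]
  apply (summable_sigma_of_nonneg (fun b => pow_nonneg h0 _)).mpr
  refine ⟨fun n => (fiber n r hrn).1, ?_⟩
  have key : ∀ n : ℕ, ∑' d : D n, r ^ wB ⟨n, d⟩ ≤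
      (Real.exp ((1 - r)⁻¹ * (1 - r)⁻¹) / (1 - r)) * r ^ (n + 1) := by
    intro n
    rw [show (fun d : D n => r ^ wB ⟨n, d⟩) = fun d : D n => r ^ wD d from rfl,
      (fiber n r hrn).2]
    have hA : r ^ (n + 1) / (1 - r ^ (n + 1)) ≤ r ^ (n + 1) / (1 - r) :=
      div_le_div_of_nonneg_left (pow_nonneg h0 _) h1r (hden (n + 1) (by omega)).2
    have hfac : ∀ k, k ∈ Icc 1 n → (0:ℝ) ≤ 1 + r ^ k / (1 - r ^ (2 * k)) := by
      intro k hk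
      simp only [Finset.mem_Icc] at hk
      have hd := hden (2 * k) (by omega)
      have : 0 ≤ r ^ k / (1 - r ^ (2 * k)) := div_nonneg (pow_nonneg h0 _) hd.1.le
      linarith
    have hB : ∏ k ∈ Icc 1 n, (1 + r ^ k / (1 - r ^ (2 * k))) ≤
        Real.exp ((1 - r)⁻¹ * (1 - r)⁻¹) := by
      calc ∏ k ∈ Icc 1 n, (1 + r ^ k / (1 - r ^ (2 * k)))
          ≤ ∏ k ∈ Icc 1 n, Real.exp (r ^ k * (1 - r)⁻¹) := by
            apply Finset.prod_le_prod hfac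
            intro k hk
            simp only [Finset.mem_Icc] at hk
            have hd := hden (2 * k) (by omega)
            have h2 : r ^ k / (1 - r ^ (2 * k)) ≤ r ^ k * (1 - r)⁻¹ := by
              rw [div_eq_mul_inv]
              exact mul_le_mul_of_nonneg_left (inv_anti₀ h1r hd.2) (pow_nonneg h0 _)
            have h3 := Real.add_one_le_exp (r ^ k * (1 - r)⁻¹)
            linarith
      _ = Real.exp (∑ k ∈ Icc 1 n, r ^ k * (1 - r)⁻¹) := (Real.exp_sum _ _).symm
      _ ≤ Real.exp ((1 - r)⁻¹ * (1 - r)⁻¹) := by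
          apply Real.exp_le_exp.mpr
          rw [← Finset.sum_mul]
          apply mul_le_mul_of_nonneg_right _ (by positivity)
          calc ∑ k ∈ Icc 1 n, r ^ k ≤ ∑' k : ℕ, r ^ k :=
                Summable.sum_le_tsum _ (fun k _ => pow_nonneg h0 _) (summable_geometric_of_lt_one h0 h1)
          _ = (1 - r)⁻¹ := tsum_geometric_of_lt_one h0 h1
    calc r ^ (n + 1) / (1 - r ^ (n + 1)) * ∏ k ∈ Icc 1 n, (1 + r ^ k / (1 - r ^ (2 * k)))
        ≤ (r ^ (n + 1) / (1 - r)) * Real.exp ((1 - r)⁻¹ * (1 - r)⁻¹) :=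
          mul_le_mul hA hB (Finset.prod_nonneg hfac) (by positivity)
    _ = (Real.exp ((1 - r)⁻¹ * (1 - r)⁻¹) / (1 - r)) * r ^ (n + 1) := by ring
  have hgeo : Summable
      (fun n : ℕ => (Real.exp ((1 - r)⁻¹ * (1 - r)⁻¹) / (1 - r)) * r ^ (n + 1)) := by
    apply Summable.mul_left
    simp_rw [pow_succ]
    exact (summable_geometric_of_lt_one h0 h1).mul_right r
  exact Summable.of_nonneg_of_le (fun n => tsum_nonneg (fun d => pow_nonneg h0 _)) key hgeo

/-! ### Combinatorial bijection -/

abbrev A : Type := Σ m : ℕ, {p : Nat.Partition (m + 1) // OddMultExceptLargest p}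

def wB' (b : B) : ℕ := b.1 + b.2.1 * (b.1 + 1) + W b.2.2.1

lemma wB'_add_one (b : B) : wB' b + 1 = wB b := by
  unfold wB' wB wD; ring

def partsOf (b : B) : Multiset ℕ :=
  Multiset.replicate (b.2.1 + 1) (b.1 + 1) +
    ∑ i : Fin b.1, Multiset.replicate (b.2.2.1 i) (i.1 + 1)

lemma count_partsOf (b : B) (a : ℕ) :
    Multiset.count a (partsOf b) =
      (if b.1 + 1 = a then b.2.1 + 1 else 0) +
        ∑ i : Fin b.1, if i.1 + 1 = a then b.2.2.1 i else 0 := by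
  unfold partsOf
  rw [Multiset.count_add, Multiset.count_sum']
  simp only [Multiset.count_replicate]

lemma count_top (n j : ℕ) (f : C n) :
    Multiset.count (n + 1) (partsOf ⟨n, (j, f)⟩) = j + 1 := by
  rw [count_partsOf]
  dsimp only
  rw [if_pos rfl, Finset.sum_eq_zero, add_zero]
  intro i _
  rw [if_neg]
  have := i.isLt
  omega

lemma count_mid (n j : ℕ) (f : C n) (i : Fin n) :
    Multiset.count (i.1 + 1) (partsOf ⟨n, (j, f)⟩) = f.1 i := by
  rw [count_partsOf]
  dsimp only
  rw [if_neg (by have := i.isLt; omega), zero_add]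
  rw [Finset.sum_eq_single i]
  · rw [if_pos rfl]
  · intro j' _ hj
    rw [if_neg]
    intro h
    exact hj (Fin.ext (by omega))
  · intro h
    exact absurd (Finset.mem_univ i) h

lemma mem_partsOf {n j : ℕ} {f : C n} {a : ℕ} (ha : a ∈ partsOf ⟨n, (j, f)⟩) :
    1 ≤ a ∧ a ≤ n + 1 := by
  unfold partsOf at ha
  dsimp only at ha
  rw [Multiset.mem_add] at ha
  rcases ha with h | h
  · rw [Multiset.eq_of_mem_replicate h]
    omega
  · rw [Multiset.mem_sum] at h
    obtain ⟨i, _, hi⟩ := h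
    rw [Multiset.eq_of_mem_replicate hi]
    have := i.isLt
    omega

lemma partsOf_sum (b : B) : (partsOf b).sum = wB b := by
  unfold partsOf wB wD
  rw [Multiset.sum_add, Multiset.sum_replicate]
  have h2 : (∑ i : Fin b.1, Multiset.replicate (b.2.2.1 i) (i.1 + 1)).sum
      = ∑ i : Fin b.1, (i.1 + 1) * b.2.2.1 i := by
    rw [← Multiset.coe_sumAddMonoidHom, map_sum]
    apply Finset.sum_congr rfl
    intro i _
    rw [Multiset.coe_sumAddMonoidHom, Multiset.sum_replicate, smul_eq_mul, mul_comm]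
  rw [h2]
  unfold W
  simp [smul_eq_mul]
  ring

def toA (b : B) : A :=
  ⟨wB' b, ⟨⟨partsOf b, fun hi => by have := (mem_partsOf hi).1; omega, by
      rw [partsOf_sum, ← wB'_add_one]⟩, by
    intro a ha hex
    obtain ⟨c, hc, hac⟩ := hex
    have h1 := mem_partsOf ha
    have h2 := mem_partsOf hc
    have hi : a - 1 < b.1 := by omega
    have hcnt := count_mid b.1 b.2.1 b.2.2 ⟨a - 1, hi⟩
    simp only at hcnt
    have ha' : a - 1 + 1 = a := by omega
    rw [ha'] at hcnt
    show Odd (Multiset.count a (partsOf b))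
    rw [hcnt]
    rcases b.2.2.2 ⟨a - 1, hi⟩ with h | h
    · exfalso
      have := Multiset.count_pos.mpr ha
      rw [hcnt] at this
      omega
    · exact h⟩⟩

lemma toA_inj : Function.Injective toA := by
  intro b b' h
  have hparts : partsOf b = partsOf b' := congrArg (fun a : A => a.2.1.parts) h
  obtain ⟨n, j, f⟩ := b
  obtain ⟨n', j', f'⟩ := b'
  have hn : n = n' := by
    have h1 : n + 1 ∈ partsOf ⟨n, (j, f)⟩ := by
      rw [← Multiset.count_pos, count_top n j f]; omega
    have h2 : n' + 1 ∈ partsOf ⟨n', (j', f')⟩ := by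
      rw [← Multiset.count_pos, count_top n' j' f']; omega
    rw [hparts] at h1
    rw [← hparts] at h2
    have := (mem_partsOf h1).2
    have := (mem_partsOf h2).2
    omega
  subst hn
  have hj : j = j' := by
    have h1 := count_top n j f
    have h2 := count_top n j' f'
    rw [hparts, h2] at h1
    omega
  have hf : f = f' := by
    apply Subtype.ext
    funext i
    have h1 := count_mid n j f i
    have h2 := count_mid n j' f' i
    rw [hparts, h2] at h1
    exact h1.symm
  rw [hj, hf]

lemma A_ext {m m' : ℕ} (h : m = m') (p : Nat.Partition (m + 1)) (p' : Nat.Partition (m' + 1))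
    (hp : OddMultExceptLargest p) (hp' : OddMultExceptLargest p')
    (hpp : p.parts = p'.parts) : (⟨m, p, hp⟩ : A) = ⟨m', p', hp'⟩ := by
  subst h
  have : p = p' := Nat.Partition.ext hpp
  subst this
  rfl

lemma toA_eq (n j : ℕ) (f : C n) {m : ℕ} (p : Nat.Partition (m + 1))
    (hp : OddMultExceptLargest p) (h : partsOf ⟨n, (j, f)⟩ = p.parts) :
    toA ⟨n, (j, f)⟩ = ⟨m, p, hp⟩ := by
  have h1 := partsOf_sum ⟨n, (j, f)⟩
  rw [h, p.parts_sum] at h1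
  have h2 := wB'_add_one ⟨n, (j, f)⟩
  exact A_ext (by omega) _ _ _ _ h

lemma toA_surj : Function.Surjective toA := by
  rintro ⟨m, p, hp⟩
  have hne : p.parts ≠ 0 := by
    intro h
    have := p.parts_sum
    rw [h] at this
    simp at this
  have hFne : p.parts.toFinset.Nonempty := Multiset.toFinset_nonempty.mpr hne
  set L := p.parts.toFinset.max' hFne with hLdef
  have hLmem : L ∈ p.parts := Multiset.mem_toFinset.mp (p.parts.toFinset.max'_mem hFne)
  have hLpos : 0 < L := p.parts_pos hLmem
  have hle : ∀ a ∈ p.parts, a ≤ L := fun a ha =>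
    p.parts.toFinset.le_max' a (Multiset.mem_toFinset.mpr ha)
  have hcount : 0 < Multiset.count L p.parts := Multiset.count_pos.mpr hLmem
  set n := L - 1 with hn
  have hL : L = n + 1 := by omega
  set g : Fin n → ℕ := fun i => Multiset.count (i.1 + 1) p.parts with hg
  have hprop : ∀ i, g i = 0 ∨ Odd (g i) := by
    intro i
    by_cases h : g i = 0
    · exact Or.inl h
    · refine Or.inr (hp _ (Multiset.count_pos.mp (Nat.pos_of_ne_zero h)) ⟨L, hLmem, ?_⟩)
      have := i.isLt
      omega
  refine ⟨⟨n, (Multiset.count L p.parts - 1, ⟨g, hprop⟩)⟩, ?_⟩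
  apply toA_eq
  apply Multiset.ext.mpr
  intro a
  by_cases h1 : a = n + 1
  · subst h1
    rw [count_top n _ _, ← hL]
    omega
  by_cases h2 : 1 ≤ a ∧ a ≤ n
  · have hi : a - 1 < n := by omega
    have hmid := count_mid n (Multiset.count L p.parts - 1) ⟨g, hprop⟩ ⟨a - 1, hi⟩
    have ha' : a - 1 + 1 = a := by omega
    rw [ha'] at hmid
    rw [hmid]
    show Multiset.count (a - 1 + 1) p.parts = Multiset.count a p.parts
    rw [ha']
  · have e1 : Multiset.count a (partsOf ⟨n, (Multiset.count L p.parts - 1, ⟨g, hprop⟩)⟩) = 0 :=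
      Multiset.count_eq_zero.mpr (fun hmem => by have := mem_partsOf hmem; omega)
    rw [e1]
    symm
    exact Multiset.count_eq_zero.mpr (fun hmem => by
      have h3 := p.parts_pos hmem
      have h4 := hle a hmem
      omega)

end PoStarAux

open PoStarAux in
theorem poStar_generating_function (q : ℂ) (hq : ‖q‖ < 1) :
    ∑' n : ℕ, (poStar (n + 1) : ℂ) * q ^ (n + 1) =
      ∑' n : ℕ, q ^ (n + 1) / (1 - q ^ (n + 1)) *
        ∏ k ∈ Finset.Icc 1 n, (1 + q ^ k / (1 - q ^ (2 * k))) := by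
  classical
  have hsB : Summable (fun b : B => q ^ wB b) := by
    apply Summable.of_norm
    simp_rw [norm_pow]
    exact summable_B_real (norm_nonneg q) hq
  have hbij : Function.Bijective toA := ⟨toA_inj, toA_surj⟩
  let E : B ≃ A := Equiv.ofBijective toA hbij
  have hcompose : ∀ b : B, (E b).1 + 1 = wB b := fun b => wB'_add_one b
  have hcomp2 : ((fun a : A => q ^ (a.1 + 1)) ∘ E) = fun b : B => q ^ wB b := by
    funext b
    simp only [Function.comp_apply]
    rw [hcompose b]
  have hsA : Summable (fun a : A => q ^ (a.1 + 1)) := by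
    rw [← E.summable_iff]
    rw [hcomp2]
    exact hsB
  have hfib : ∀ m : ℕ,
      ∑' _p : {p : Nat.Partition (m + 1) // OddMultExceptLargest p}, q ^ (m + 1)
        = (poStar (m + 1) : ℂ) * q ^ (m + 1) := by
    intro m
    letI : Fintype {p : Nat.Partition (m + 1) // OddMultExceptLargest p} := Fintype.ofFinite _
    rw [tsum_fintype, Finset.sum_const, Finset.card_univ]
    have : poStar (m + 1) = Fintype.card {p : Nat.Partition (m + 1) // OddMultExceptLargest p} := by
      unfold poStar
      exact Nat.card_eq_fintype_card
    rw [this, nsmul_eq_mul]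
  calc ∑' n : ℕ, (poStar (n + 1) : ℂ) * q ^ (n + 1)
      = ∑' m : ℕ, ∑' _p : {p : Nat.Partition (m + 1) // OddMultExceptLargest p}, q ^ (m + 1) :=
        tsum_congr fun m => (hfib m).symm
    _ = ∑' a : A, q ^ (a.1 + 1) := (Summable.tsum_sigma hsA).symm
    _ = ∑' b : B, q ^ wB b := by
        rw [← E.tsum_eq (fun a : A => q ^ (a.1 + 1))]
        exact tsum_congr fun b => by rw [hcompose b]
    _ = ∑' n : ℕ, ∑' d : D n, q ^ wB ⟨n, d⟩ := Summable.tsum_sigma hsB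
    _ = ∑' n : ℕ, q ^ (n + 1) / (1 - q ^ (n + 1)) *
        ∏ k ∈ Finset.Icc 1 n, (1 + q ^ k / (1 - q ^ (2 * k))) := by
        apply tsum_congr
        intro n
        exact (fiber n q hq).2
end
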